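/- arXiv:2109.00409 — 4 statements merged into one kernel-verified Lean document; each statement's English description precedes it below -/
import Mathlib

section
/- Let G ∈ 𝒢_n^m whose strong component G* is a directed cycle of length m ≥ 3 (so every vertex of S has within-S outdegree 1, G* has no symmetric arcs, and c₂(G*) = 0), and let 0 ≤ α < 1. Then α²·n ≤ E_α(G) ≤ α²·((n−m+1)² + m − 1). For 0 < α < 1, the lower bound is attained if and only if every hung tree is an in-tree with root at its cycle vertex, and the upper bound is attained if and only if all hung trees but one are trivial (single vertices) and the remaining one is an out-star of size n−m+1 whose centre is its cycle vertex. -/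
open Polynomial Matrix Finset

/-- The outdegree of a vertex `v` of the digraph with adjacency matrix `A`. -/
noncomputable def outdeg {V : Type*} [Fintype V] (A : Matrix V V ℝ) (v : V) : ℝ := ∑ w, A v w

/-- The `A_α`-matrix `α·D⁺ + (1-α)·A` of a digraph with adjacency matrix `A`. -/
noncomputable def Aalpha {V : Type*} [Fintype V] [DecidableEq V] (α : ℝ) (A : Matrix V V ℝ) :
    Matrix V V ℝ :=
  α • Matrix.diagonal (outdeg A) + (1 - α) • A

/-- The spectral radius of a real square matrix: the maximum modulus of its complex
eigenvalues (roots of the characteristic polynomial over `ℂ`). -/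
noncomputable def specRad {V : Type*} [Fintype V] [DecidableEq V] (M : Matrix V V ℝ) : ℝ :=
  sSup {x : ℝ | ∃ z : ℂ, (M.map ((↑) : ℝ → ℂ)).charpoly.IsRoot z ∧ ‖z‖ = x}

/-- The `A_α` energy of a digraph: the sum of the squares of the eigenvalues of its
`A_α`-matrix, equivalently `trace (A_α(G)²)`. -/
noncomputable def Ealpha {V : Type*} [Fintype V] [DecidableEq V] (α : ℝ) (A : Matrix V V ℝ) : ℝ :=
  Matrix.trace (Aalpha α A * Aalpha α A)

/-- The outdegree of `s` within the vertex set `S` (the within-`S` outdegree `d*(s)`). -/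
noncomputable def dStar {V : Type*} [Fintype V] (A : Matrix V V ℝ) (S : Finset V) (s : V) : ℝ :=
  ∑ v ∈ S, A s v

/-- The size `n_s` of the fiber `r⁻¹(s)`. -/
def fibCard {V : Type*} [Fintype V] [DecidableEq V] (r : V → V) (s : V) : ℕ :=
  (Finset.univ.filter (fun v => r v = s)).card

/-- The underlying undirected graph of the induced subdigraph on the fiber `r⁻¹(s)`. -/
def fiberGraph {V : Type*} (A : Matrix V V ℝ) (r : V → V) (s : V) :
    SimpleGraph {v : V // r v = s} where
  Adj u w := u ≠ w ∧ (A u.1 w.1 = 1 ∨ A w.1 u.1 = 1)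
  symm := ⟨fun _ _ h => ⟨h.1.symm, h.2.symm⟩⟩
  loopless := ⟨fun _ h => h.1 rfl⟩

/-- The principal submatrix of `A` with rows and columns indexed by `S`. -/
def subm {V : Type*} (A : Matrix V V ℝ) (S : Finset V) :
    Matrix {v : V // v ∈ S} {v : V // v ∈ S} ℝ :=
  A.submatrix (fun x => x.1) (fun x => x.1)

/-- `c₂(G*) = trace(A*²)`, the number of closed walks of length 2 in the strong component. -/
noncomputable def c2star {V : Type*} [Fintype V] [DecidableEq V] (A : Matrix V V ℝ)
    (S : Finset V) : ℝ :=
  Matrix.trace (subm A S * subm A S)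

/-- Membership in the class `𝒢_n^m`: `A` is the adjacency matrix of a digraph of order `n`
with a unique strong component on the vertex set `S` of order `m`, with a directed tree
(the fiber `r⁻¹(s)`) hung on each vertex `s ∈ S`. -/
structure IsGnm {V : Type*} [Fintype V] [DecidableEq V] (A : Matrix V V ℝ) (S : Finset V)
    (r : V → V) (n m : ℕ) : Prop where
  zero_one : ∀ u v, A u v = 0 ∨ A u v = 1
  loopless : ∀ v, A v v = 0
  card_V : Fintype.card V = n
  card_S : S.card = m
  two_le_m : 2 ≤ m
  m_lt_n : m < n
  strong : ∀ u ∈ S, ∀ v ∈ S, Relation.ReflTransGen (fun a b => a ∈ S ∧ b ∈ S ∧ A a b = 1) u v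
  r_mem : ∀ v, r v ∈ S
  r_fix : ∀ s ∈ S, r s = s
  arc_cases : ∀ u v, A u v = 1 → (u ∈ S ∧ v ∈ S) ∨ r u = r v
  fiber_no_symm : ∀ u v, r u = r v → A u v = 1 → A v u = 0
  fiber_tree : ∀ s ∈ S, (fiberGraph A r s).IsTree

/-- Every hung tree is an in-tree with root at its vertex of `S`: inside each fiber the
root has outdegree `0` and every other vertex has outdegree `1`. -/
def InTrees {V : Type*} [Fintype V] [DecidableEq V] (A : Matrix V V ℝ) (S : Finset V)
    (r : V → V) : Prop :=
  (∀ v, v ∉ S → (∑ w ∈ Finset.univ.filter (fun w => r w = r v), A v w) = 1) ∧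
  (∀ s ∈ S, (∑ w ∈ Finset.univ.filter (fun w => r w = s), A s w) = 0)

/-- All hung trees are trivial except the one at `v`, which is an out-star with centre `v`. -/
def OutStarAt {V : Type*} [Fintype V] [DecidableEq V] (A : Matrix V V ℝ) (S : Finset V)
    (r : V → V) (v : V) : Prop :=
  (∀ s ∈ S, s ≠ v → fibCard r s = 1) ∧ (∀ u w, r u = v → A u w = 1 → u = v)
section AuxStmt13

variable {V : Type*} [Fintype V] [DecidableEq V]

lemma sum01 {ι : Type*} (s : Finset ι) (f : ι → ℝ) (h : ∀ i ∈ s, f i = 0 ∨ f i = 1) :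
    ∃ k : ℕ, ∑ i ∈ s, f i = (k : ℝ) := by
  classical
  induction s using Finset.induction_on with
  | empty => exact ⟨0, by simp⟩
  | @insert x s hxs ih =>
    obtain ⟨k, hk⟩ := ih (fun i hi => h i (Finset.mem_insert_of_mem hi))
    rcases h x (Finset.mem_insert_self x s) with h0 | h1
    · exact ⟨k, by rw [Finset.sum_insert hxs, h0, hk]; ring⟩
    · exact ⟨k + 1, by rw [Finset.sum_insert hxs, h1, hk]; push_cast; ring⟩

lemma A_nonneg {A : Matrix V V ℝ} (h01 : ∀ u v, A u v = 0 ∨ A u v = 1) (u v : V) :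
    0 ≤ A u v := by rcases h01 u v with h | h <;> simp [h]

lemma no_symm {A : Matrix V V ℝ} {S : Finset V} {r : V → V} {n m : ℕ}
    (hG : IsGnm A S r n m) (hm3 : 3 ≤ m) (hcycle : ∀ s ∈ S, dStar A S s = 1) :
    ∀ u v, A u v * A v u = 0 := by
  intro u v
  rcases hG.zero_one u v with h | h
  · simp [h]
  rcases hG.zero_one v u with h' | h'
  · simp [h']
  exfalso
  have huv : u ≠ v := by
    rintro rfl; rw [hG.loopless] at h; norm_num at h
  rcases hG.arc_cases u v h with ⟨hu, hv⟩ | hr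
  · -- both in S: contradiction via strong connectivity and outdeg 1
    have uniqueOut : ∀ a ∈ S, ∀ b₁ ∈ S, ∀ b₂ ∈ S, A a b₁ = 1 → A a b₂ = 1 → b₁ = b₂ := by
      intro a ha b₁ hb₁ b₂ hb₂ h1 h2
      by_contra hne
      have hsub : ({b₁, b₂} : Finset V) ⊆ S := by
        intro x hx; simp at hx; rcases hx with rfl | rfl <;> assumption
      have h2le : (2 : ℝ) ≤ dStar A S a := by
        have := Finset.sum_le_sum_of_subset_of_nonneg hsub
          (fun i _ _ => A_nonneg hG.zero_one a i)
        rw [Finset.sum_pair hne, h1, h2] at this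
        unfold dStar; linarith
      rw [hcycle a ha] at h2le; norm_num at h2le
    have hcard : ({u, v} : Finset V).card < S.card := by
      have hm := hG.card_S
      have h2 : ({u, v} : Finset V).card ≤ 2 := (Finset.card_insert_le u {v}).trans (by simp)
      omega
    have hns : ¬ S ⊆ ({u, v} : Finset V) := fun hsub => by
      have := Finset.card_le_card hsub; omega
    obtain ⟨x, hxS, hx⟩ := Finset.not_subset.1 hns
    have key : ∀ y, Relation.ReflTransGen (fun a b => a ∈ S ∧ b ∈ S ∧ A a b = 1) u y →
        y = u ∨ y = v := by
      intro y hy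
      induction hy with
      | refl => exact Or.inl rfl
      | tail _ hbc ih =>
        obtain ⟨hbS, hcS, hAbc⟩ := hbc
        rcases ih with rfl | rfl
        · exact Or.inr (uniqueOut _ hu v hv _ hcS h hAbc).symm
        · exact Or.inl (uniqueOut _ hv u hu _ hcS h' hAbc).symm
    rcases key x (hG.strong u hu x hxS) with rfl | rfl <;> exact hx (by simp)
  · have := hG.fiber_no_symm u v hr h
    rw [this] at h'; norm_num at h'
lemma energy_eq (A : Matrix V V ℝ) (hdiag : ∀ v, A v v = 0)
    (hsym : ∀ u v, A u v * A v u = 0) (α : ℝ) :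
    Ealpha α A = α ^ 2 * ∑ v, (outdeg A v) ^ 2 := by
  unfold Ealpha
  rw [Matrix.trace, Finset.mul_sum]
  refine Finset.sum_congr rfl fun u _ => ?_
  rw [Matrix.diag_apply, Matrix.mul_apply]
  have hmain : ∀ v, Aalpha α A u v * Aalpha α A v u
      = if v = u then α ^ 2 * (outdeg A u) ^ 2 else 0 := by
    intro v
    by_cases hvu : v = u
    · subst hvu
      rw [if_pos rfl]
      simp only [ Aalpha, Matrix.add_apply, Matrix.smul_apply,
        Matrix.diagonal_apply_eq, hdiag v, smul_eq_mul]
      ring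
    · simp only [if_neg hvu, Aalpha, Matrix.add_apply, Matrix.smul_apply,
        Matrix.diagonal_apply_ne _ (Ne.symm hvu), Matrix.diagonal_apply_ne _ hvu,
        smul_eq_mul, mul_zero, zero_add]
      linear_combination (1 - α) ^ 2 * hsym u v
  rw [Finset.sum_congr rfl (fun v _ => hmain v), Finset.sum_ite_eq' Finset.univ u
    (fun _ => α ^ 2 * (outdeg A u) ^ 2)]
  simp
lemma fiber_sum {A : Matrix V V ℝ} {S : Finset V} {r : V → V} {n m : ℕ}
    (hG : IsGnm A S r n m) {s : V} (hs : s ∈ S) :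
    (∑ v ∈ univ.filter (fun v => r v = s), ∑ w ∈ univ.filter (fun w => r w = s), A v w) + 1
      = (fibCard r s : ℝ) := by
  classical
  set G := fiberGraph A r s with hGdef
  letI : DecidableRel G.Adj := Classical.decRel _
  have e1 : ∀ f : V → ℝ, ∑ v ∈ univ.filter (fun v => r v = s), f v
      = ∑ v : {x : V // r x = s}, f v.1 :=
    fun f => Finset.sum_subtype _ (by simp) f
  have hsub : (∑ v ∈ univ.filter (fun v => r v = s), ∑ w ∈ univ.filter (fun w => r w = s), A v w)
      = ∑ v : {x : V // r x = s}, ∑ w : {x : V // r x = s}, A v.1 w.1 := by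
    rw [e1]
    exact Finset.sum_congr rfl fun v _ => e1 _
  have hdeg : ∀ u : {x : V // r x = s}, (G.degree u : ℝ)
      = ∑ w : {x : V // r x = s}, (A u.1 w.1 + A w.1 u.1) := by
    intro u
    rw [← SimpleGraph.card_neighborFinset_eq_degree, SimpleGraph.neighborFinset_eq_filter,
      Finset.card_filter]
    push_cast
    refine Finset.sum_congr rfl fun w _ => ?_
    by_cases hadj : G.Adj u w
    · rw [if_pos hadj]
      obtain ⟨hne, h1 | h1⟩ := hadj
      · have h2 := hG.fiber_no_symm u.1 w.1 (by rw [u.2, w.2]) h1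
        rw [h1, h2]; ring
      · have h2 := hG.fiber_no_symm w.1 u.1 (by rw [u.2, w.2]) h1
        rw [h1, h2]; ring
    · rw [if_neg hadj]
      by_cases hw : u = w
      · subst hw; rw [hG.loopless]; ring
      · have h1 : A u.1 w.1 ≠ 1 := fun hh => hadj ⟨hw, Or.inl hh⟩
        have h2 : A w.1 u.1 ≠ 1 := fun hh => hadj ⟨hw, Or.inr hh⟩
        rcases hG.zero_one u.1 w.1 with h | h
        · rcases hG.zero_one w.1 u.1 with h' | h'
          · rw [h, h']; ring
          · exact absurd h' h2
        · exact absurd h h1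
  have htree := hG.fiber_tree s hs
  have hedge : G.edgeFinset.card + 1 = Fintype.card {x : V // r x = s} :=
    htree.card_edgeFinset
  have hsumdeg : ∑ u : {x : V // r x = s}, G.degree u = 2 * G.edgeFinset.card :=
    SimpleGraph.sum_degrees_eq_twice_card_edges G
  have hcardT : Fintype.card {x : V // r x = s} = fibCard r s := Fintype.card_subtype _
  -- put it together over ℝ
  have hswap : ∑ v : {x : V // r x = s}, ∑ w : {x : V // r x = s}, A w.1 v.1
      = ∑ v : {x : V // r x = s}, ∑ w : {x : V // r x = s}, A v.1 w.1 := Finset.sum_comm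
  have hR : (2 : ℝ) * (∑ v : {x : V // r x = s}, ∑ w : {x : V // r x = s}, A v.1 w.1)
      = 2 * ((fibCard r s : ℝ) - 1) := by
    have := congrArg (fun k : ℕ => (k : ℝ)) hsumdeg
    push_cast at this
    rw [Finset.sum_congr rfl (fun u _ => hdeg u)] at this
    simp only [Finset.sum_add_distrib] at this
    rw [hswap] at this
    have hfc : (G.edgeFinset.card : ℝ) = (fibCard r s : ℝ) - 1 := by
      have := congrArg (fun k : ℕ => (k : ℝ)) hedge
      push_cast at this
      rw [← hcardT]; push_cast; linarith
    rw [hfc] at this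
    linarith
  rw [hsub]
  linarith
lemma outdeg_eq {A : Matrix V V ℝ} {S : Finset V} {r : V → V} {n m : ℕ}
    (hG : IsGnm A S r n m) (hcycle : ∀ s ∈ S, dStar A S s = 1) (v : V) :
    outdeg A v = (if v ∈ S then (1 : ℝ) else 0)
      + ∑ w ∈ univ.filter (fun w => r w = r v), A v w := by
  classical
  by_cases hv : v ∈ S
  · have hrv : r v = v := hG.r_fix v hv
    rw [if_pos hv, hrv]
    set F := univ.filter (fun w => r w = v) with hF
    have hzero : ∀ w ∈ (univ : Finset V), w ∉ S ∪ F → A v w = 0 := by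
      intro w _ hw
      rcases hG.zero_one v w with h | h
      · exact h
      · exfalso
        rcases hG.arc_cases v w h with ⟨_, hwS⟩ | hr
        · exact hw (Finset.mem_union_left _ hwS)
        · exact hw (Finset.mem_union_right _ (by simp [hF, ← hr, hrv]))
    have hsplit : outdeg A v = ∑ w ∈ S ∪ F, A v w :=
      (Finset.sum_subset (Finset.subset_univ _) hzero).symm
    have hint : S ∩ F = {v} := by
      ext w
      simp only [Finset.mem_inter, hF, Finset.mem_filter, Finset.mem_univ, true_and,
        Finset.mem_singleton]
      constructor
      · rintro ⟨hwS, hrw⟩; rw [← hG.r_fix w hwS, hrw]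
      · rintro rfl; exact ⟨hv, hrv⟩
    have hui : ∑ w ∈ S ∪ F, A v w + ∑ w ∈ S ∩ F, A v w = ∑ w ∈ S, A v w + ∑ w ∈ F, A v w :=
      Finset.sum_union_inter
    rw [hint, Finset.sum_singleton, hG.loopless v, add_zero] at hui
    have hds : ∑ w ∈ S, A v w = 1 := hcycle v hv
    rw [hsplit, hui, hds]
  · rw [if_neg hv, zero_add]
    have hzero : ∀ w ∈ (univ : Finset V), w ∉ univ.filter (fun w => r w = r v) → A v w = 0 := by
      intro w _ hw
      rcases hG.zero_one v w with h | h
      · exact h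
      · exfalso
        rcases hG.arc_cases v w h with ⟨hvS, _⟩ | hr
        · exact hv hvS
        · exact hw (by simp [← hr])
    exact (Finset.sum_subset (Finset.subset_univ _) hzero).symm

end AuxStmt13

/-- For `G ∈ 𝒢_n^m` whose strong component is a directed cycle of length `m ≥ 3`
(equivalently, being strongly connected, every vertex of `S` has within-`S` outdegree `1`),
`α²n ≤ E_α(G) ≤ α²((n-m+1)² + m - 1)`; for `0 < α < 1` the lower bound is attained iff all
hung trees are in-trees, and the upper bound iff all hung trees but one are trivial and the
remaining one is an out-star of size `n-m+1` centred at its cycle vertex. -/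
theorem stmt13 {V : Type*} [Fintype V] [DecidableEq V] (A : Matrix V V ℝ) (S : Finset V)
    (r : V → V) (n m : ℕ) (hG : IsGnm A S r n m) (hm3 : 3 ≤ m)
    (hcycle : ∀ s ∈ S, dStar A S s = 1)
    (α : ℝ) (hα0 : 0 ≤ α) (hα1 : α < 1) :
    (α ^ 2 * (n : ℝ) ≤ Ealpha α A ∧
      Ealpha α A ≤ α ^ 2 * (((n : ℝ) - m + 1) ^ 2 + (m : ℝ) - 1)) ∧
    (0 < α →
      ((Ealpha α A = α ^ 2 * (n : ℝ) ↔ InTrees A S r) ∧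
       (Ealpha α A = α ^ 2 * (((n : ℝ) - m + 1) ^ 2 + (m : ℝ) - 1) ↔
          ∃ v ∈ S, OutStarAt A S r v))) := by
  classical
  have hsym := no_symm hG hm3 hcycle
  have hE : Ealpha α A = α ^ 2 * ∑ v, (outdeg A v) ^ 2 := energy_eq A hG.loopless hsym α
  set t : V → ℝ := fun v => ∑ w ∈ univ.filter (fun w => r w = r v), A v w with ht_def
  have ht0 : ∀ v, 0 ≤ t v :=
    fun v => Finset.sum_nonneg fun w _ => A_nonneg hG.zero_one v w
  have htnat : ∀ v, ∃ k : ℕ, t v = k := fun v => sum01 _ _ fun w _ => hG.zero_one v w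
  have hd : ∀ v, outdeg A v = (if v ∈ S then (1 : ℝ) else 0) + t v :=
    fun v => outdeg_eq hG hcycle v
  -- per-fiber sums
  have hfib : ∀ s ∈ S, (∑ v ∈ univ.filter (fun v => r v = s), t v) + 1 = (fibCard r s : ℝ) := by
    intro s hs
    rw [← fiber_sum hG hs]
    congr 1
    refine Finset.sum_congr rfl fun v hv => ?_
    simp only [Finset.mem_filter] at hv
    simp only [ht_def]
    rw [hv.2]
  have hsum_fib : ∀ f : V → ℝ,
      ∑ s ∈ S, ∑ v ∈ univ.filter (fun v => r v = s), f v = ∑ v, f v :=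
    fun f => Finset.sum_fiberwise_of_maps_to (fun v _ => hG.r_mem v) f
  have hcount : ∑ s ∈ S, (fibCard r s : ℝ) = (n : ℝ) := by
    have h1 := hsum_fib fun _ => (1 : ℝ)
    simp only [Finset.sum_const, nsmul_eq_mul, mul_one, Finset.card_univ, hG.card_V] at h1
    simpa [fibCard] using h1
  have htsum : ∑ v, t v = (n : ℝ) - m := by
    rw [← hsum_fib t]
    have h2 : ∑ s ∈ S, ((fibCard r s : ℝ) - 1) = (n : ℝ) - m := by
      rw [Finset.sum_sub_distrib, hcount, Finset.sum_const, hG.card_S]; simp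
    rw [← h2]
    refine Finset.sum_congr rfl fun s hs => ?_
    have := hfib s hs; linarith
  have hchi : ∑ v, (if v ∈ S then (1 : ℝ) else 0) = (m : ℝ) := by
    rw [Finset.sum_ite_mem, Finset.univ_inter, Finset.sum_const, hG.card_S]; simp
  -- lower bound pointwise
  have hlow_pt : ∀ v, (if v ∈ S then (1 : ℝ) else 0) + t v ≤ (outdeg A v) ^ 2 := by
    intro v
    rw [hd v]
    by_cases hv : v ∈ S
    · simp only [if_pos hv]; nlinarith [ht0 v]
    · simp only [if_neg hv, zero_add]
      obtain ⟨k, hk⟩ := htnat v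
      rw [hk]
      have : k ≤ k ^ 2 := Nat.le_self_pow two_ne_zero k
      exact_mod_cast this
  have hsumlow : (n : ℝ) ≤ ∑ v, (outdeg A v) ^ 2 := by
    have h1 : ∑ v, ((if v ∈ S then (1 : ℝ) else 0) + t v) = (n : ℝ) := by
      rw [Finset.sum_add_distrib, hchi, htsum]; ring
    rw [← h1]
    exact Finset.sum_le_sum fun v _ => hlow_pt v
  -- upper bound
  let K : ℝ := (n : ℝ) - m + 1
  have hK : K = (n : ℝ) - m + 1 := rfl
  have hK2 : 2 ≤ K := by
    have h := hG.m_lt_n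
    have : (m : ℝ) + 1 ≤ n := by exact_mod_cast h
    rw [hK]; linarith
  have htle : ∀ v, t v ≤ K - 1 := by
    intro v
    have h1 : t v ≤ ∑ u, t u := Finset.single_le_sum (fun u _ => ht0 u) (Finset.mem_univ v)
    rw [htsum] at h1; rw [hK]; linarith
  have hup_pt : ∀ v,
      (outdeg A v) ^ 2 ≤ (if v ∈ S then (1 : ℝ) else 0) + t v + K * t v := by
    intro v
    rw [hd v]
    have h1 := ht0 v
    have h2 := htle v
    by_cases hv : v ∈ S
    · simp only [if_pos hv]; nlinarith [mul_nonneg (sub_nonneg.2 h2) h1]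
    · simp only [if_neg hv, zero_add]; nlinarith [mul_nonneg (sub_nonneg.2 h2) h1]
  have hsum3 : ∑ v, ((if v ∈ S then (1 : ℝ) else 0) + t v + K * t v)
      = (n : ℝ) + K * (K - 1) := by
    rw [Finset.sum_add_distrib, Finset.sum_add_distrib, hchi, htsum, ← Finset.mul_sum,
      htsum, hK]
    ring
  have hsumup : ∑ v, (outdeg A v) ^ 2 ≤ (n : ℝ) + K * (K - 1) := by
    rw [← hsum3]
    exact Finset.sum_le_sum fun v _ => hup_pt v
  have htarget : ((n : ℝ) - m + 1) ^ 2 + (m : ℝ) - 1 = (n : ℝ) + K * (K - 1) := by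
    rw [hK]; ring
  constructor
  · constructor
    · rw [hE]
      exact mul_le_mul_of_nonneg_left hsumlow (pow_nonneg hα0 2)
    · rw [hE, htarget]
      exact mul_le_mul_of_nonneg_left hsumup (pow_nonneg hα0 2)
  · intro hαpos
    have hα2 : α ^ 2 ≠ 0 := by positivity
    have hiff : ∀ X : ℝ, (Ealpha α A = α ^ 2 * X ↔ ∑ v, (outdeg A v) ^ 2 = X) := by
      intro X; rw [hE]; exact mul_right_inj' hα2
    constructor
    · rw [hiff]
      constructor
      · intro heq
        have hz : ∀ v, (outdeg A v) ^ 2 = (if v ∈ S then (1 : ℝ) else 0) + t v := by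
          have hsum0 : ∑ v, ((outdeg A v) ^ 2 - ((if v ∈ S then (1 : ℝ) else 0) + t v)) = 0 := by
            rw [Finset.sum_sub_distrib, heq, Finset.sum_add_distrib, hchi, htsum]; ring
          intro v
          have h2 := (Finset.sum_eq_zero_iff_of_nonneg
            (fun v _ => sub_nonneg.2 (hlow_pt v))).1 hsum0 v (Finset.mem_univ v)
          linarith
        have htS : ∀ s ∈ S, t s = 0 := by
          intro s hs
          have h1 := hz s
          rw [hd s] at h1; simp only [if_pos hs] at h1
          nlinarith [ht0 s]
        have htle1 : ∀ v, v ∉ S → t v ≤ 1 := by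
          intro v hv
          have h1 := hz v
          rw [hd v] at h1; simp only [if_neg hv, zero_add] at h1
          obtain ⟨k, hk⟩ := htnat v
          rw [hk] at h1 ⊢
          have hkk : k ^ 2 = k := by exact_mod_cast h1
          have : k ≤ 1 := by nlinarith
          exact_mod_cast this
        have hnt1 : ∀ v, v ∉ S → t v = 1 := by
          intro v hv
          have hsS : r v ∈ S := hG.r_mem v
          have hvs : v ≠ r v := fun h => hv (h ▸ hsS)
          have hsmem : r v ∈ univ.filter (fun u => r u = r v) := by
            simp [hG.r_fix (r v) hsS]
          have hmem : v ∈ (univ.filter (fun u => r u = r v)).erase (r v) :=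
            Finset.mem_erase.2 ⟨hvs, by simp⟩
          have hsum_er : ∑ u ∈ (univ.filter (fun u => r u = r v)).erase (r v), t u
              = (fibCard r (r v) : ℝ) - 1 := by
            have h1 := hfib (r v) hsS
            rw [← Finset.add_sum_erase _ t hsmem, htS (r v) hsS, zero_add] at h1
            linarith
          have hfc1 : 1 ≤ fibCard r (r v) := by
            have h2 := Finset.card_pos.2 ⟨r v, hsmem⟩
            unfold fibCard; omega
          have hcard_cast : ((((univ.filter (fun u => r u = r v)).erase (r v)).card : ℝ))
              = (fibCard r (r v) : ℝ) - 1 := by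
            rw [Finset.card_erase_of_mem hsmem]
            rw [show ((univ.filter (fun u => r u = r v)).card) = fibCard r (r v) from rfl]
            rw [Nat.cast_sub hfc1, Nat.cast_one]
          have h1le : ∀ u ∈ (univ.filter (fun u => r u = r v)).erase (r v), t u ≤ 1 := by
            intro u hu
            rw [Finset.mem_erase, Finset.mem_filter] at hu
            have huS : u ∉ S := fun hc => hu.1 (by rw [← hG.r_fix u hc, hu.2.2])
            exact htle1 u huS
          have hzero2 : ∑ u ∈ (univ.filter (fun u => r u = r v)).erase (r v), (1 - t u) = 0 := by
            rw [Finset.sum_sub_distrib, Finset.sum_const, hsum_er, nsmul_eq_mul, mul_one,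
              hcard_cast]
            ring
          have h3 := (Finset.sum_eq_zero_iff_of_nonneg
            (fun u hu => sub_nonneg.2 (h1le u hu))).1 hzero2 v hmem
          linarith
        refine ⟨fun v hv => ?_, fun s hs => ?_⟩
        · exact hnt1 v hv
        · have h0 := htS s hs
          simp only [ht_def] at h0
          rw [hG.r_fix s hs] at h0
          exact h0
      · intro hIT
        have hpt : ∀ v, (outdeg A v) ^ 2 = (if v ∈ S then (1 : ℝ) else 0) + t v := by
          intro v
          rw [hd v]
          by_cases hv : v ∈ S
          · have h0 : t v = 0 := by
              have h1 := hIT.2 v hv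
              simp only [ht_def]
              rw [hG.r_fix v hv]
              exact h1
            rw [h0, if_pos hv]; norm_num
          · have h1 : t v = 1 := hIT.1 v hv
            rw [h1, if_neg hv]; norm_num
        rw [Finset.sum_congr rfl fun v _ => hpt v, Finset.sum_add_distrib, hchi, htsum]; ring
    · rw [hiff, htarget]
      constructor
      · intro heq
        have hz : ∀ v, (if v ∈ S then (1 : ℝ) else 0) + t v + K * t v = (outdeg A v) ^ 2 := by
          have hsum0 : ∑ v, (((if v ∈ S then (1 : ℝ) else 0) + t v + K * t v)
              - (outdeg A v) ^ 2) = 0 := by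
            rw [Finset.sum_sub_distrib, hsum3, heq]; ring
          intro v
          have h2 := (Finset.sum_eq_zero_iff_of_nonneg
            (fun v _ => sub_nonneg.2 (hup_pt v))).1 hsum0 v (Finset.mem_univ v)
          linarith
        have htout : ∀ v, v ∉ S → t v = 0 := by
          intro v hv
          have h1 := hz v
          rw [hd v] at h1; simp only [if_neg hv, zero_add] at h1
          have h2 : t v * (1 + K - t v) = 0 := by linear_combination h1
          rcases mul_eq_zero.1 h2 with h | h
          · exact h
          · exfalso; have h3 := htle v; linarith
        have htSd : ∀ s ∈ S, t s = 0 ∨ t s = K - 1 := by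
          intro s hs
          have h1 := hz s
          rw [hd s] at h1; simp only [if_pos hs] at h1
          have h2 : t s * (K - 1 - t s) = 0 := by linear_combination h1
          rcases mul_eq_zero.1 h2 with h | h
          · exact Or.inl h
          · exact Or.inr (by linarith)
        have hSeq : ∑ u ∈ S, t u = ∑ u, t u :=
          Finset.sum_subset (Finset.subset_univ S) (fun u _ hu => htout u hu)
        have hsumS : ∑ u ∈ S, t u = K - 1 := by
          rw [hSeq, htsum, hK]; ring
        obtain ⟨v, hvS, hvt⟩ : ∃ v ∈ S, t v ≠ 0 := by
          by_contra hno
          push_neg at hno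
          have h1 : ∑ u ∈ S, t u = 0 := Finset.sum_eq_zero fun u hu => hno u hu
          rw [hsumS] at h1; linarith
        have hv1 : t v = K - 1 := (htSd v hvS).resolve_left hvt
        have hothers : ∀ s ∈ S, s ≠ v → t s = 0 := by
          intro s hs hsv
          have herase : ∑ u ∈ S.erase v, t u = 0 := by
            have h1 : t v + ∑ u ∈ S.erase v, t u = ∑ u ∈ S, t u :=
              Finset.add_sum_erase S t hvS
            rw [hsumS, hv1] at h1; linarith
          exact (Finset.sum_eq_zero_iff_of_nonneg (fun u _ => ht0 u)).1 herase s
            (Finset.mem_erase.2 ⟨hsv, hs⟩)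
        refine ⟨v, hvS, fun s hs hsv => ?_, fun u w hru hA => ?_⟩
        · have hall : ∑ u ∈ univ.filter (fun u => r u = s), t u = 0 := by
            refine Finset.sum_eq_zero fun u hu => ?_
            simp only [Finset.mem_filter] at hu
            by_cases huS : u ∈ S
            · have h5 : u = s := by rw [← hG.r_fix u huS, hu.2]
              rw [h5]; exact hothers s hs hsv
            · exact htout u huS
          have h6 := hfib s hs
          rw [hall, zero_add] at h6
          exact_mod_cast h6.symm
        · by_contra hne
          have huS : u ∉ S := fun hc => hne (by rw [← hG.r_fix u hc, hru])
          have h0 : t u = 0 := htout u huS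
          rcases hG.arc_cases u w hA with ⟨hc, _⟩ | hr
          · exact huS hc
          · have hwmem : w ∈ univ.filter (fun x => r x = r u) := by simp [← hr]
            have h7 : A u w ≤ t u :=
              Finset.single_le_sum (f := fun x => A u x)
                (fun x _ => A_nonneg hG.zero_one u x) hwmem
            rw [hA, h0] at h7
            linarith
      · rintro ⟨v, hvS, hOS1, hOS2⟩
        have c1 : ∀ u, u ∉ S → r u = v := by
          intro u hu
          by_contra hne
          have hf1 := hOS1 (r u) (hG.r_mem u) hne
          have h2 : ({u, r u} : Finset V) ⊆ univ.filter (fun x => r x = r u) := by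
            intro x hx
            simp only [Finset.mem_insert, Finset.mem_singleton] at hx
            rcases hx with rfl | rfl
            · simp
            · simp [hG.r_fix (r u) (hG.r_mem u)]
          have h3 : u ≠ r u := fun h => hu (h ▸ hG.r_mem u)
          have h4 := Finset.card_le_card h2
          rw [Finset.card_pair h3] at h4
          unfold fibCard at hf1
          omega
        have c2 : ∀ u, u ≠ v → t u = 0 := by
          intro u hne
          by_cases hu : u ∈ S
          · have hf1 := hOS1 u hu hne
            have h1 := hfib u hu
            rw [hf1] at h1
            norm_num at h1
            have hmem : u ∈ univ.filter (fun x => r x = u) := by simp [hG.r_fix u hu]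
            exact (Finset.sum_eq_zero_iff_of_nonneg (fun x _ => ht0 x)).1 h1 u hmem
          · have hru : r u = v := c1 u hu
            simp only [ht_def]
            refine Finset.sum_eq_zero fun w hw => ?_
            rcases hG.zero_one u w with h | h
            · exact h
            · exact absurd (hOS2 u w hru h) hne
        have c3 : t v = K - 1 := by
          have h1 : ∑ u, t u = t v :=
            Finset.sum_eq_single v (fun u _ hne => c2 u hne)
              (fun h => absurd (Finset.mem_univ v) h)
          rw [htsum] at h1
          rw [hK]; linarith
        have hpt : ∀ u, (outdeg A u) ^ 2 = (if u ∈ S then (1 : ℝ) else 0) + t u + K * t u := by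
          intro u
          rw [hd u]
          by_cases hu : u = v
          · subst hu
            rw [if_pos hvS, c3]; ring
          · rw [c2 u hu]
            by_cases hu2 : u ∈ S <;> simp [hu2]
        rw [Finset.sum_congr rfl fun u _ => hpt u, hsum3]
end

section
/- Let G ∈ 𝒢_n^2 whose strong component G* is the directed 2-cycle C₂ (two vertices joined by a symmetric pair of arcs, so both within-S outdegrees equal 1 and c₂(G*) = 2), and let 0 ≤ α < 1. Then α²·n + 2(1−α)² ≤ E_α(G) ≤ α²·((n−1)² + 1) + 2(1−α)². For 0 < α < 1, the lower bound is attained if and only if both hung trees are in-trees with roots at the cycle vertices, and the upper bound is attained if and only if one hung tree is a single vertex and the other is an out-star of size n−1 whose centre is its cycle vertex. -/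
open Polynomial Matrix Finset

set_option maxHeartbeats 2000000

/- ------------------ auxiliary lemmas ------------------- -/

lemma aux_sum_sq_le {ι : Type*} (T : Finset ι) (f : ι → ℝ) (hf : ∀ i ∈ T, 0 ≤ f i) :
    ∑ i ∈ T, f i ^ 2 ≤ (∑ i ∈ T, f i) ^ 2 := by
  have hB : ∀ i ∈ T, f i ≤ ∑ j ∈ T, f j := fun i hi => Finset.single_le_sum hf hi
  have h1 : ∀ i ∈ T, f i ^ 2 ≤ f i * ∑ j ∈ T, f j := by
    intro i hi
    rw [sq]
    exact mul_le_mul_of_nonneg_left (hB i hi) (hf i hi)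
  calc ∑ i ∈ T, f i ^ 2 ≤ ∑ i ∈ T, f i * ∑ j ∈ T, f j := Finset.sum_le_sum h1
    _ = (∑ i ∈ T, f i) ^ 2 := by rw [← Finset.sum_mul, sq]

lemma aux_fiber_arc_count {V : Type*} [Fintype V] [DecidableEq V] (A : Matrix V V ℝ) (r : V → V)
    (h0 : ∀ u v, A u v = 0 ∨ A u v = 1)
    (hns : ∀ u v, r u = r v → A u v = 1 → A v u = 0)
    (s : V) (ht : (fiberGraph A r s).IsTree) :
    ∑ u ∈ univ.filter (fun v => r v = s), ∑ w ∈ univ.filter (fun v => r v = s), A u w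
      = (fibCard r s : ℝ) - 1 := by
  classical
  set G := fiberGraph A r s with hGdef
  letI : DecidableRel G.Adj := fun a b => Classical.dec _
  have hsub : ∑ u ∈ univ.filter (fun v => r v = s), ∑ w ∈ univ.filter (fun v => r v = s), A u w
      = ∑ u : {v : V // r v = s}, ∑ w : {v : V // r v = s}, A u.1 w.1 := by
    rw [Finset.sum_subtype (p := fun v => r v = s) _ (by simp)
      (fun u => ∑ w ∈ univ.filter (fun v => r v = s), A u w)]
    exact Finset.sum_congr rfl fun u _ =>
      Finset.sum_subtype (p := fun v => r v = s) _ (by simp) (fun w => A u.1 w)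
  have key : ∀ u w : {v : V // r v = s}, A u.1 w.1 + A w.1 u.1
      = if G.Adj u w then (1 : ℝ) else 0 := by
    intro u w
    have hr : r u.1 = r w.1 := u.2.trans w.2.symm
    by_cases huw : u = w
    · subst huw
      rcases h0 u.1 u.1 with h | h
      · simp [h, G.loopless.irrefl u]
      · have := hns u.1 u.1 rfl h; rw [this] at h; norm_num at h
    · by_cases hadj : G.Adj u w
      · rcases (show u ≠ w ∧ (A u.1 w.1 = 1 ∨ A w.1 u.1 = 1) by rw [hGdef] at hadj; exact hadj).2 with h | h
        · have h2 : A w.1 u.1 = 0 := hns _ _ hr h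
          simp [h, h2, hadj]
        · have h2 : A u.1 w.1 = 0 := hns _ _ hr.symm h
          simp [h, h2, hadj]
      · have h1 : A u.1 w.1 = 0 := by
          rcases h0 u.1 w.1 with h | h
          · exact h
          · exact absurd (show G.Adj u w by rw [hGdef]; exact And.intro huw (Or.inl h)) hadj
        have h2 : A w.1 u.1 = 0 := by
          rcases h0 w.1 u.1 with h | h
          · exact h
          · exact absurd (show G.Adj u w by rw [hGdef]; exact And.intro huw (Or.inr h)) hadj
        simp [h1, h2, hadj]
  have hdouble : 2 * (∑ u : {v : V // r v = s}, ∑ w : {v : V // r v = s}, A u.1 w.1)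
      = ∑ u : {v : V // r v = s}, ∑ w : {v : V // r v = s}, (if G.Adj u w then (1:ℝ) else 0) := by
    have hswap : ∑ u : {v : V // r v = s}, ∑ w : {v : V // r v = s}, A u.1 w.1
        = ∑ u : {v : V // r v = s}, ∑ w : {v : V // r v = s}, A w.1 u.1 := by
      rw [Finset.sum_comm]
    rw [two_mul]
    nth_rewrite 2 [hswap]
    rw [← Finset.sum_add_distrib]
    refine Finset.sum_congr rfl fun u _ => ?_
    rw [← Finset.sum_add_distrib]
    exact Finset.sum_congr rfl fun w _ => key u w
  have hdeg : ∀ u : {v : V // r v = s},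
      ∑ w : {v : V // r v = s}, (if G.Adj u w then (1:ℝ) else 0) = (G.degree u : ℝ) := by
    intro u
    rw [SimpleGraph.degree, Finset.card_eq_sum_ones, SimpleGraph.neighborFinset_eq_filter,
      Finset.sum_filter]
    push_cast
    rfl
  have hedges : ∑ u : {v : V // r v = s}, (G.degree u : ℝ) = 2 * (G.edgeFinset.card : ℝ) := by
    rw [← Nat.cast_sum]
    exact_mod_cast congrArg Nat.cast G.sum_degrees_eq_twice_card_edges
  have hcardV : (Fintype.card {v : V // r v = s}) = fibCard r s := by
    simp [fibCard, Fintype.card_subtype]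
  have htree : (G.edgeFinset.card : ℝ) + 1 = (fibCard r s : ℝ) := by
    rw [← hcardV]
    exact_mod_cast congrArg Nat.cast ht.card_edgeFinset
  rw [hsub]
  have := hdouble.trans ((Finset.sum_congr rfl fun u _ => hdeg u).trans hedges)
  linarith

lemma aux_Ealpha_eq {V : Type*} [Fintype V] [DecidableEq V] (α : ℝ) (A : Matrix V V ℝ)
    (hl : ∀ v, A v v = 0) :
    Ealpha α A = α ^ 2 * (∑ v, (outdeg A v) ^ 2) + (1 - α) ^ 2 * Matrix.trace (A * A) := by
  have h1 : Matrix.trace (diagonal (outdeg A) * A) = 0 := by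
    simp only [Matrix.trace, Matrix.diag, diagonal_mul, of_apply]
    exact Finset.sum_eq_zero fun v _ => by rw [hl v, mul_zero]
  have h2 : Matrix.trace (A * diagonal (outdeg A)) = 0 := by
    simp only [Matrix.trace, Matrix.diag, mul_diagonal]
    exact Finset.sum_eq_zero fun v _ => by rw [hl v, zero_mul]
  have h3 : Matrix.trace (diagonal (outdeg A) * diagonal (outdeg A)) = ∑ v, (outdeg A v)^2 := by
    rw [diagonal_mul_diagonal, trace_diagonal]
    exact Finset.sum_congr rfl fun v _ => (sq (outdeg A v)).symm
  rw [Ealpha, Aalpha, add_mul, mul_add, mul_add, trace_add, trace_add, trace_add,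
    smul_mul_smul_comm, smul_mul_smul_comm, smul_mul_smul_comm, smul_mul_smul_comm,
    trace_smul, trace_smul, trace_smul, trace_smul, h1, h2, h3]
  simp only [smul_eq_mul]
  ring

/-- For `G ∈ 𝒢_n^2` whose strong component is the symmetric `2`-cycle `C₂`,
`α²n + 2(1-α)² ≤ E_α(G) ≤ α²((n-1)² + 1) + 2(1-α)²`; for `0 < α < 1` the lower bound is
attained iff both hung trees are in-trees, and the upper bound iff one hung tree is a
single vertex and the other is an out-star of size `n-1` centred at its cycle vertex. -/
theorem stmt14 {V : Type*} [Fintype V] [DecidableEq V] (A : Matrix V V ℝ) (S : Finset V)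
    (r : V → V) (n : ℕ) (hG : IsGnm A S r n 2)
    (hC2 : ∀ s ∈ S, ∀ t ∈ S, s ≠ t → A s t = 1)
    (α : ℝ) (hα0 : 0 ≤ α) (hα1 : α < 1) :
    (α ^ 2 * (n : ℝ) + 2 * (1 - α) ^ 2 ≤ Ealpha α A ∧
      Ealpha α A ≤ α ^ 2 * (((n : ℝ) - 1) ^ 2 + 1) + 2 * (1 - α) ^ 2) ∧
    (0 < α →
      ((Ealpha α A = α ^ 2 * (n : ℝ) + 2 * (1 - α) ^ 2 ↔ InTrees A S r) ∧
       (Ealpha α A = α ^ 2 * (((n : ℝ) - 1) ^ 2 + 1) + 2 * (1 - α) ^ 2 ↔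
          ∃ v ∈ S, OutStarAt A S r v))) := by
  classical
  obtain ⟨s, t, hst, hS⟩ := Finset.card_eq_two.1 hG.card_S
  have hs : s ∈ S := by rw [hS]; simp
  have ht : t ∈ S := by rw [hS]; simp
  have hA0 : ∀ u v, 0 ≤ A u v := by
    intro u v; rcases hG.zero_one u v with h | h <;> rw [h] <;> norm_num
  have hd0 : ∀ v, 0 ≤ outdeg A v :=
    fun v => Finset.sum_nonneg fun w _ => hA0 v w
  have hn3 : (3 : ℝ) ≤ (n : ℝ) := by
    have : 3 ≤ n := hG.m_lt_n
    exact_mod_cast this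
  -- dichotomy
  have hdich : ∀ v, outdeg A v = 0 ∨ 1 ≤ outdeg A v := by
    intro v
    by_cases hz : ∀ w, A v w = 0
    · left; exact Finset.sum_eq_zero fun w _ => hz w
    · right
      push_neg at hz
      obtain ⟨w, hw⟩ := hz
      have h1 : A v w = 1 := (hG.zero_one v w).resolve_left hw
      calc (1:ℝ) = A v w := h1.symm
        _ ≤ outdeg A v := Finset.single_le_sum (fun i _ => hA0 v i) (Finset.mem_univ w)
  -- trace (A*A) = 2
  have htr : Matrix.trace (A * A) = 2 := by
    have hterm : ∀ u v : V, A u v * A v u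
        = if u ∈ S ∧ v ∈ S then A u v * A v u else 0 := by
      intro u v
      by_cases h : u ∈ S ∧ v ∈ S
      · rw [if_pos h]
      · rw [if_neg h]
        rcases hG.zero_one u v with h1 | h1
        · rw [h1, zero_mul]
        · rcases hG.zero_one v u with h2 | h2
          · rw [h2, mul_zero]
          · rcases hG.arc_cases u v h1 with hc | hc
            · exact absurd hc h
            · rw [hG.fiber_no_symm u v hc h1] at h2; norm_num at h2
    have h1 : Matrix.trace (A * A) = ∑ u, ∑ v, A u v * A v u := by
      simp [Matrix.trace, Matrix.diag, Matrix.mul_apply]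
    rw [h1]
    have h2 : ∑ u, ∑ v, A u v * A v u = ∑ u ∈ S, ∑ v ∈ S, A u v * A v u := by
      rw [Finset.sum_congr rfl fun u _ => Finset.sum_congr rfl fun v _ => hterm u v]
      have hrow : ∀ u : V, (∑ v, if u ∈ S ∧ v ∈ S then A u v * A v u else 0)
          = if u ∈ S then ∑ v ∈ S, A u v * A v u else 0 := by
        intro u
        by_cases hu : u ∈ S
        · rw [if_pos hu]
          simp only [hu, true_and]
          rw [Finset.sum_ite_mem, Finset.univ_inter]
        · rw [if_neg hu]
          simp [hu]
      rw [Finset.sum_congr rfl fun u _ => hrow u, Finset.sum_ite_mem, Finset.univ_inter]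
    rw [h2, hS, Finset.sum_pair hst, Finset.sum_pair hst, Finset.sum_pair hst,
      hG.loopless s, hG.loopless t, hC2 s hs t ht hst, hC2 t ht s hs hst.symm]
    ring
  -- Ealpha formula
  have hE : Ealpha α A = α ^ 2 * (∑ v, (outdeg A v) ^ 2) + 2 * (1 - α) ^ 2 := by
    rw [aux_Ealpha_eq α A hG.loopless, htr]; ring
  -- pointwise arc split
  have hsplit : ∀ v w, A v w = (if v ∈ S ∧ w ∈ S then A v w else 0)
      + (if r v = r w then A v w else 0) := by
    intro v w
    by_cases h1 : v ∈ S ∧ w ∈ S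
    · by_cases h2 : r v = r w
      · have hvw : v = w := by
          rw [← hG.r_fix v h1.1, ← hG.r_fix w h1.2, h2]
        rw [if_pos h1, if_pos h2, hvw, hG.loopless w]; ring
      · rw [if_pos h1, if_neg h2]; ring
    · by_cases h2 : r v = r w
      · rw [if_neg h1, if_pos h2]; ring
      · rw [if_neg h1, if_neg h2]
        rcases hG.zero_one v w with h | h
        · rw [h]; ring
        · rcases hG.arc_cases v w h with hc | hc
          · exact absurd hc h1
          · exact absurd hc h2
  -- outdegree of vertices of S
  have hdS : ∀ p ∈ S, outdeg A p
      = 1 + ∑ w ∈ univ.filter (fun w => r w = p), A p w := by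
    intro p hp
    have hq : ∃ q, q ∈ S ∧ q ≠ p := by
      rcases hS with rfl
      rcases Finset.mem_insert.1 hp with rfl | hp'
      · exact ⟨t, ht, hst.symm⟩
      · rw [Finset.mem_singleton] at hp'; subst hp'
        exact ⟨s, hs, hst⟩
    obtain ⟨q, hqS, hqp⟩ := hq
    have hSpq : S = {p, q} := by
      refine (Finset.eq_of_subset_of_card_le ?_ ?_).symm
      · intro x hx
        rcases Finset.mem_insert.1 hx with rfl | hx'
        · exact hp
        · rw [Finset.mem_singleton] at hx'; subst hx'; exact hqS
      · rw [hG.card_S, Finset.card_pair (Ne.symm hqp)]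
    have h1 : outdeg A p = (∑ w, if p ∈ S ∧ w ∈ S then A p w else 0)
        + ∑ w, if r p = r w then A p w else 0 := by
      rw [outdeg, Finset.sum_congr rfl fun w _ => hsplit p w, Finset.sum_add_distrib]
    rw [h1]
    have h2 : (∑ w, if p ∈ S ∧ w ∈ S then A p w else 0) = 1 := by
      simp only [hp, true_and]
      rw [Finset.sum_ite_mem, Finset.univ_inter, hSpq, Finset.sum_pair (Ne.symm hqp),
        hG.loopless p, hC2 p hp q hqS (Ne.symm hqp)]
      ring
    have h3 : (∑ w, if r p = r w then A p w else 0)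
        = ∑ w ∈ univ.filter (fun w => r w = p), A p w := by
      rw [Finset.sum_filter]
      refine Finset.sum_congr rfl fun w _ => if_congr ?_ rfl rfl
      rw [hG.r_fix p hp, eq_comm]
    rw [h2, h3]
  -- outdegree of vertices outside S
  have hdNS : ∀ v, v ∉ S → outdeg A v
      = ∑ w ∈ univ.filter (fun w => r w = r v), A v w := by
    intro v hv
    have h1 : outdeg A v = (∑ w, if v ∈ S ∧ w ∈ S then A v w else 0)
        + ∑ w, if r v = r w then A v w else 0 := by
      rw [outdeg, Finset.sum_congr rfl fun w _ => hsplit v w, Finset.sum_add_distrib]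
    rw [h1]
    have h2 : (∑ w, if v ∈ S ∧ w ∈ S then A v w else 0) = 0 := by
      simp [hv]
    have h3 : (∑ w, if r v = r w then A v w else 0)
        = ∑ w ∈ univ.filter (fun w => r w = r v), A v w := by
      rw [Finset.sum_filter]
      exact Finset.sum_congr rfl fun w _ => if_congr (eq_comm) rfl rfl
    rw [h2, h3, zero_add]
  -- fiber arc counts
  have hecount : ∀ p ∈ S,
      ∑ u ∈ univ.filter (fun v => r v = p), ∑ w ∈ univ.filter (fun v => r v = p), A u w
        = (fibCard r p : ℝ) - 1 :=
    fun p hp => aux_fiber_arc_count A r hG.zero_one hG.fiber_no_symm p (hG.fiber_tree p hp)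
  -- fiber sizes sum to n
  have hfibsum : ∀ p q : V, p ∈ S → q ∈ S → p ≠ q →
      (fibCard r p : ℝ) + (fibCard r q : ℝ) = (n : ℝ) := by
    intro p q hp hq hpq
    have hSpq : S = {p, q} := by
      refine (Finset.eq_of_subset_of_card_le ?_ ?_).symm
      · intro x hx
        rcases Finset.mem_insert.1 hx with rfl | hx'
        · exact hp
        · rw [Finset.mem_singleton] at hx'; subst hx'; exact hq
      · rw [hG.card_S, Finset.card_pair hpq]
    have h1 : (Finset.univ : Finset V).card
        = ∑ x ∈ S, (univ.filter (fun v => r v = x)).card :=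
      Finset.card_eq_sum_card_fiberwise fun v _ => hG.r_mem v
    have h2 : Fintype.card V = fibCard r p + fibCard r q := by
      rw [← Finset.card_univ, h1, hSpq, Finset.sum_pair hpq]; rfl
    have := hG.card_V
    rw [this] at h2
    exact_mod_cast h2.symm
  -- fiber arc decomposition
  have hedecomp : ∀ p ∈ S,
      ∑ u ∈ univ.filter (fun v => r v = p), ∑ w ∈ univ.filter (fun v => r v = p), A u w
        = (∑ w ∈ univ.filter (fun w => r w = p), A p w)
          + ∑ u ∈ (univ.filter (fun v => r v = p)).erase p, outdeg A u := by
    intro p hp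
    have hpmem : p ∈ univ.filter (fun v => r v = p) := by
      simp [hG.r_fix p hp]
    rw [← Finset.add_sum_erase _ _ hpmem]
    congr 1
    refine Finset.sum_congr rfl fun u hu => ?_
    obtain ⟨hup, hu'⟩ := Finset.mem_erase.1 hu
    have hru : r u = p := (Finset.mem_filter.1 hu').2
    have huS : u ∉ S := fun huS => hup ((hG.r_fix u huS).symm.trans hru)
    rw [hdNS u huS, hru]
  -- total degree sum
  have hdtot : ∑ v, outdeg A v = (n : ℝ) := by
    have h1 : ∑ v, outdeg A v = (∑ v, ∑ w, if v ∈ S ∧ w ∈ S then A v w else 0)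
        + ∑ v, ∑ w, if r v = r w then A v w else 0 := by
      simp only [outdeg]
      rw [← Finset.sum_add_distrib]
      exact Finset.sum_congr rfl fun v _ => by
        rw [← Finset.sum_add_distrib]
        exact Finset.sum_congr rfl fun w _ => hsplit v w
    have h2 : (∑ v, ∑ w, if v ∈ S ∧ w ∈ S then A v w else 0) = 2 := by
      have hrow : ∀ v : V, (∑ w, if v ∈ S ∧ w ∈ S then A v w else 0)
          = if v ∈ S then ∑ w ∈ S, A v w else 0 := by
        intro v
        by_cases hv : v ∈ S
        · rw [if_pos hv]
          simp only [hv, true_and]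
          rw [Finset.sum_ite_mem, Finset.univ_inter]
        · rw [if_neg hv]; simp [hv]
      rw [Finset.sum_congr rfl fun v _ => hrow v, Finset.sum_ite_mem, Finset.univ_inter,
        hS, Finset.sum_pair hst, Finset.sum_pair hst, Finset.sum_pair hst,
        hG.loopless s, hG.loopless t, hC2 s hs t ht hst, hC2 t ht s hs hst.symm]
      ring
    have h3 : (∑ v, ∑ w, if r v = r w then A v w else 0) = (n : ℝ) - 2 := by
      have hrow : ∀ v : V, (∑ w, if r v = r w then A v w else 0)
          = ∑ w ∈ univ.filter (fun w => r w = r v), A v w := by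
        intro v
        rw [Finset.sum_filter]
        exact Finset.sum_congr rfl fun w _ => if_congr (eq_comm) rfl rfl
      rw [Finset.sum_congr rfl fun v _ => hrow v]
      have hfw : ∑ p ∈ S, ∑ v ∈ univ.filter (fun v => r v = p),
            (∑ w ∈ univ.filter (fun w => r w = r v), A v w)
          = ∑ v, ∑ w ∈ univ.filter (fun w => r w = r v), A v w :=
        Finset.sum_fiberwise_of_maps_to (fun v _ => hG.r_mem v) _
      rw [← hfw]
      have hfib : ∀ p ∈ S, ∑ v ∈ univ.filter (fun v => r v = p),
            (∑ w ∈ univ.filter (fun w => r w = r v), A v w)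
          = (fibCard r p : ℝ) - 1 := by
        intro p hp
        rw [← hecount p hp]
        refine Finset.sum_congr rfl fun v hv => ?_
        have hrv : r v = p := (Finset.mem_filter.1 hv).2
        rw [hrv]
      rw [Finset.sum_congr rfl hfib, hS, Finset.sum_pair hst]
      have := hfibsum s t hs ht hst
      linarith
    rw [h1, h2, h3]; ring
  -- shared quantities
  have hdS1 : ∀ p ∈ S, 1 ≤ outdeg A p := by
    intro p hp
    rw [hdS p hp]
    have : 0 ≤ ∑ w ∈ univ.filter (fun w => r w = p), A p w :=
      Finset.sum_nonneg fun w _ => hA0 p w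
    linarith
  -- lower bound
  have hQn : (n : ℝ) ≤ ∑ v, outdeg A v ^ 2 := by
    rw [← hdtot]
    refine Finset.sum_le_sum fun v _ => ?_
    rcases hdich v with h | h
    · rw [h]; norm_num
    · nlinarith
  -- upper bound
  have hQs : ∑ v, outdeg A v ^ 2
      = outdeg A s ^ 2 + ∑ v ∈ univ.erase s, outdeg A v ^ 2 :=
    (Finset.add_sum_erase _ _ (Finset.mem_univ s)).symm
  have hBdef : outdeg A s + ∑ v ∈ univ.erase s, outdeg A v = (n : ℝ) := by
    rw [Finset.add_sum_erase _ _ (Finset.mem_univ s), hdtot]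
  have hBsq : ∑ v ∈ univ.erase s, outdeg A v ^ 2
      ≤ (∑ v ∈ univ.erase s, outdeg A v) ^ 2 :=
    aux_sum_sq_le _ _ fun i _ => hd0 i
  have hB1 : 1 ≤ ∑ v ∈ univ.erase s, outdeg A v := by
    calc (1:ℝ) ≤ outdeg A t := hdS1 t ht
      _ ≤ ∑ v ∈ univ.erase s, outdeg A v :=
        Finset.single_le_sum (fun i _ => hd0 i)
          (Finset.mem_erase.2 ⟨hst.symm, Finset.mem_univ t⟩)
  have ha1 : 1 ≤ outdeg A s := hdS1 s hs
  have hQupper : ∑ v, outdeg A v ^ 2 ≤ ((n:ℝ) - 1) ^ 2 + 1 := by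
    nlinarith [mul_nonneg (by linarith : (0:ℝ) ≤ outdeg A s - 1)
      (by linarith : (0:ℝ) ≤ (∑ v ∈ univ.erase s, outdeg A v) - 1)]
  -- the key lemma for the upper equality case
  have key : ∀ p q : V, p ∈ S → q ∈ S → p ≠ q →
      (∑ v ∈ univ.erase p, outdeg A v) = 1 → OutStarAt A S r p := by
    intro p q hp hq hpq hb1
    have hdq1 : outdeg A q = 1 := by
      have h1 : outdeg A q ≤ 1 := by
        rw [← hb1]
        exact Finset.single_le_sum (fun i _ => hd0 i)
          (Finset.mem_erase.2 ⟨Ne.symm hpq, Finset.mem_univ q⟩)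
      linarith [hdS1 q hq]
    have hrest : ∀ v, v ≠ p → v ≠ q → outdeg A v = 0 := by
      have hqmem : q ∈ univ.erase p := Finset.mem_erase.2 ⟨Ne.symm hpq, Finset.mem_univ q⟩
      have hz : ∑ v ∈ (univ.erase p).erase q, outdeg A v = 0 := by
        have h := Finset.add_sum_erase _ (outdeg A) hqmem
        rw [hb1, hdq1] at h
        linarith
      intro v hvp hvq
      exact (Finset.sum_eq_zero_iff_of_nonneg (fun i _ => hd0 i)).1 hz v
        (Finset.mem_erase.2 ⟨hvq, Finset.mem_erase.2 ⟨hvp, Finset.mem_univ v⟩⟩)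
    have hdp : outdeg A p = (n:ℝ) - 1 := by
      have h := Finset.add_sum_erase _ (outdeg A) (Finset.mem_univ p)
      rw [hb1, hdtot] at h
      linarith
    have hFp : ∑ w ∈ univ.filter (fun w => r w = p), A p w = (n:ℝ) - 2 := by
      have := hdS p hp
      rw [hdp] at this
      linarith
    have hep : (fibCard r p : ℝ) - 1 = (n:ℝ) - 2 := by
      rw [← hecount p hp, hedecomp p hp, hFp]
      have hzero : ∑ u ∈ (univ.filter (fun v => r v = p)).erase p, outdeg A u = 0 := by
        refine Finset.sum_eq_zero fun u hu => ?_
        obtain ⟨hup, hu'⟩ := Finset.mem_erase.1 hu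
        have hru : r u = p := (Finset.mem_filter.1 hu').2
        have huq : u ≠ q := by
          intro heq
          rw [heq, hG.r_fix q hq] at hru
          exact hpq hru.symm
        exact hrest u hup huq
      rw [hzero]; ring
    have hfibq : fibCard r q = 1 := by
      have h1 := hfibsum p q hp hq hpq
      have h2 : (fibCard r q : ℝ) = 1 := by linarith
      exact_mod_cast h2
    have hSpq : S = {p, q} := by
      refine (Finset.eq_of_subset_of_card_le ?_ ?_).symm
      · intro x hx
        rcases Finset.mem_insert.1 hx with rfl | hx'
        · exact hp
        · rw [Finset.mem_singleton] at hx'; subst hx'; exact hq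
      · rw [hG.card_S, Finset.card_pair hpq]
    refine ⟨?_, ?_⟩
    · intro s' hs' hs'p
      have : s' = q := by
        rw [hSpq] at hs'
        rcases Finset.mem_insert.1 hs' with rfl | h
        · exact absurd rfl hs'p
        · exact Finset.mem_singleton.1 h
      rw [this]; exact hfibq
    · intro u w hru hA1
      by_contra hup
      have huq : u ≠ q := by
        intro heq
        rw [heq, hG.r_fix q hq] at hru
        exact hpq hru.symm
      have h0' : outdeg A u = 0 := hrest u hup huq
      have hzero : A u w = 0 :=
        (Finset.sum_eq_zero_iff_of_nonneg (fun i _ => hA0 u i)).1 h0' w (Finset.mem_univ w)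
      rw [hA1] at hzero; norm_num at hzero
  -- out-star implies Q = (n-1)^2 + 1
  have hOS : ∀ p q : V, p ∈ S → q ∈ S → p ≠ q → OutStarAt A S r p →
      (∑ v, outdeg A v ^ 2) = ((n:ℝ) - 1) ^ 2 + 1 := by
    intro p q hp hq hpq hstar
    have hfibq : fibCard r q = 1 := hstar.1 q hq (Ne.symm hpq)
    have hqfix : r q = q := hG.r_fix q hq
    have hfq : univ.filter (fun v => r v = q) = {q} := by
      have hqmem : q ∈ univ.filter (fun v => r v = q) := by simp [hqfix]
      have := Finset.card_eq_one.1 hfibq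
      obtain ⟨a, ha⟩ := this
      rw [ha] at hqmem ⊢
      rw [Finset.mem_singleton.1 hqmem]
    have hSpq : S = {p, q} := by
      refine (Finset.eq_of_subset_of_card_le ?_ ?_).symm
      · intro x hx
        rcases Finset.mem_insert.1 hx with rfl | hx'
        · exact hp
        · rw [Finset.mem_singleton] at hx'; subst hx'; exact hq
      · rw [hG.card_S, Finset.card_pair hpq]
    -- every vertex other than p, q lies in the fiber of p and has outdegree 0
    have hrv : ∀ v : V, v ≠ q → r v = p := by
      intro v hvq
      have := hG.r_mem v
      rw [hSpq] at this
      rcases Finset.mem_insert.1 this with h | h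
      · exact h
      · rw [Finset.mem_singleton] at h
        exfalso
        have : v ∈ univ.filter (fun x => r x = q) := by simp [h]
        rw [hfq, Finset.mem_singleton] at this
        exact hvq this
    have hrest : ∀ u, u ≠ p → u ≠ q → outdeg A u = 0 := by
      intro u hup huq
      have hru : r u = p := hrv u huq
      have huS : u ∉ S := by
        intro huS
        rw [hSpq] at huS
        rcases Finset.mem_insert.1 huS with rfl | h
        · exact hup rfl
        · exact huq (Finset.mem_singleton.1 h)
      rw [hdNS u huS, hru]
      refine Finset.sum_eq_zero fun w hw => ?_
      rcases hG.zero_one u w with h | h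
      · exact h
      · exact absurd (hstar.2 u w hru h) hup
    have hdq1 : outdeg A q = 1 := by
      rw [hdS q hq]
      have : ∑ w ∈ univ.filter (fun w => r w = q), A q w = 0 := by
        rw [hfq, Finset.sum_singleton, hG.loopless q]
      rw [this]; ring
    have hfibp : (fibCard r p : ℝ) = (n:ℝ) - 1 := by
      have := hfibsum p q hp hq hpq
      rw [hfibq] at this
      push_cast at this ⊢
      linarith
    have hdp : outdeg A p = (n:ℝ) - 1 := by
      rw [hdS p hp]
      have hzero : ∑ u ∈ (univ.filter (fun v => r v = p)).erase p, outdeg A u = 0 := by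
        refine Finset.sum_eq_zero fun u hu => ?_
        obtain ⟨hup, hu'⟩ := Finset.mem_erase.1 hu
        have hru : r u = p := (Finset.mem_filter.1 hu').2
        have huq : u ≠ q := by
          intro heq
          rw [heq, hqfix] at hru
          exact hpq hru.symm
        exact hrest u hup huq
      have h1 := hedecomp p hp
      rw [hzero, add_zero] at h1
      rw [hecount p hp] at h1
      rw [← h1, hfibp]
      ring
    have hsum : ∑ v, outdeg A v ^ 2
        = outdeg A p ^ 2 + (outdeg A q ^ 2
          + ∑ v ∈ (univ.erase p).erase q, outdeg A v ^ 2) := by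
      rw [← Finset.add_sum_erase _ (fun v => outdeg A v ^ 2) (Finset.mem_univ p),
        ← Finset.add_sum_erase _ (fun v => outdeg A v ^ 2)
          (Finset.mem_erase.2 ⟨Ne.symm hpq, Finset.mem_univ q⟩)]
    have hzero2 : ∑ v ∈ (univ.erase p).erase q, outdeg A v ^ 2 = 0 := by
      refine Finset.sum_eq_zero fun v hv => ?_
      obtain ⟨hvq, hv'⟩ := Finset.mem_erase.1 hv
      obtain ⟨hvp, _⟩ := Finset.mem_erase.1 hv'
      rw [hrest v hvp hvq]; ring
    rw [hsum, hzero2, hdp, hdq1]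
    ring
  refine ⟨⟨?_, ?_⟩, ?_⟩
  · rw [hE]
    nlinarith [sq_nonneg α]
  · rw [hE]
    nlinarith [sq_nonneg α]
  · intro hα
    have hα2 : (0:ℝ) < α ^ 2 := by positivity
    constructor
    · -- lower equality iff InTrees
      constructor
      · intro hEeq
        rw [hE] at hEeq
        have hQ : ∑ v, outdeg A v ^ 2 = (n:ℝ) := by
          have h1 : α ^ 2 * (∑ v, outdeg A v ^ 2) = α ^ 2 * (n:ℝ) := by linarith
          exact mul_left_cancel₀ (ne_of_gt hα2) h1
        -- each outdegree is 0 or 1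
        have hd01 : ∀ v, outdeg A v = 0 ∨ outdeg A v = 1 := by
          have hterm : ∀ v ∈ (univ : Finset V), outdeg A v ≤ outdeg A v ^ 2 := by
            intro v _
            rcases hdich v with h | h
            · rw [h]; norm_num
            · nlinarith
          have hsum0 : ∑ v, (outdeg A v ^ 2 - outdeg A v) = 0 := by
            rw [Finset.sum_sub_distrib, hQ, hdtot]; ring
          have hall : ∀ v ∈ (univ : Finset V), outdeg A v ^ 2 - outdeg A v = 0 :=
            (Finset.sum_eq_zero_iff_of_nonneg fun v hv => by linarith [hterm v hv]).1 hsum0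
          intro v
          have := hall v (Finset.mem_univ v)
          have h2 : outdeg A v * (outdeg A v - 1) = 0 := by nlinarith
          rcases mul_eq_zero.1 h2 with h | h
          · left; exact h
          · right; linarith
        constructor
        · -- each non-root fiber vertex has out-sum 1
          intro v hv
          have hrvS : r v ∈ S := hG.r_mem v
          set p := r v with hpdef
          have hvp : v ≠ p := by
            intro h
            rw [h] at hv
            exact hv hrvS
          -- v belongs to the erase set of the fiber of p
          have hvmem : v ∈ (univ.filter (fun u => r u = p)).erase p := by
            refine Finset.mem_erase.2 ⟨hvp, ?_⟩
            simp [hpdef]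
          -- the root out-sum is 0
          have hFp0 : ∑ w ∈ univ.filter (fun w => r w = p), A p w = 0 := by
            have h1 := hdS p hrvS
            have hnn : 0 ≤ ∑ w ∈ univ.filter (fun w => r w = p), A p w :=
              Finset.sum_nonneg fun w _ => hA0 p w
            rcases hd01 p with h | h
            · rw [h] at h1; linarith
            · rw [h] at h1; linarith
          -- the erase sum equals its cardinality
          have hcard : ((univ.filter (fun u => r u = p)).erase p).card
              = fibCard r p - 1 := by
            rw [Finset.card_erase_of_mem (by simp [hG.r_fix p hrvS])]
            rfl
          have hfib1 : 1 ≤ fibCard r p :=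
            Finset.card_pos.2 ⟨p, by simp [hG.r_fix p hrvS]⟩
          have hsum1 : ∑ u ∈ (univ.filter (fun u => r u = p)).erase p, outdeg A u
              = (fibCard r p : ℝ) - 1 := by
            have h1 := hedecomp p hrvS
            rw [hecount p hrvS] at h1
            rw [hFp0, zero_add] at h1
            linarith [h1]
          have heach : ∀ u ∈ (univ.filter (fun u => r u = p)).erase p, outdeg A u = 1 := by
            have hs0 : ∑ u ∈ (univ.filter (fun u => r u = p)).erase p,
                (1 - outdeg A u) = 0 := by
              rw [Finset.sum_sub_distrib, Finset.sum_const, hsum1, hcard]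
              have : ((fibCard r p - 1 : ℕ) : ℝ) = (fibCard r p : ℝ) - 1 := by
                push_cast [Nat.cast_sub hfib1]
                ring
              rw [nsmul_eq_mul, this]
              ring
            have := (Finset.sum_eq_zero_iff_of_nonneg fun u _ => by
              rcases hd01 u with h | h
              · rw [h]; norm_num
              · rw [h]; norm_num).1 hs0
            intro u hu
            have h := this u hu
            linarith
          have hdv1 : outdeg A v = 1 := heach v hvmem
          rw [← hdNS v hv, hdv1]
        · -- roots have fiber out-sum 0
          intro p hp
          have h1 := hdS p hp
          have hnn : 0 ≤ ∑ w ∈ univ.filter (fun w => r w = p), A p w :=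
            Finset.sum_nonneg fun w _ => hA0 p w
          rcases hd01 p with h | h
          · rw [h] at h1; linarith
          · rw [h] at h1; linarith
      · -- InTrees → equality
        intro hIT
        have hall1 : ∀ v, outdeg A v = 1 := by
          intro v
          by_cases hv : v ∈ S
          · rw [hdS v hv, hIT.2 v hv]; ring
          · rw [hdNS v hv, hIT.1 v hv]
        have hQ : ∑ v, outdeg A v ^ 2 = (n:ℝ) := by
          rw [Finset.sum_congr rfl fun v _ => by rw [hall1 v, one_pow]]
          rw [Finset.sum_const, Finset.card_univ, hG.card_V, nsmul_eq_mul, mul_one]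
        rw [hE, hQ]
    · -- upper equality iff ∃ out-star
      constructor
      · intro hEeq
        rw [hE] at hEeq
        have hQ : ∑ v, outdeg A v ^ 2 = ((n:ℝ) - 1) ^ 2 + 1 := by
          have h1 : α ^ 2 * (∑ v, outdeg A v ^ 2)
              = α ^ 2 * (((n:ℝ) - 1) ^ 2 + 1) := by linarith
          exact mul_left_cancel₀ (ne_of_gt hα2) h1
        -- abbreviations
        set a := outdeg A s with ha
        set B := ∑ v ∈ univ.erase s, outdeg A v with hB
        have hBn : a + B = (n:ℝ) := hBdef
        have habeq : (a - 1) * (B - 1) = 0 := by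
          have h2 : ((n:ℝ) - 1) ^ 2 + 1 ≤ a ^ 2 + B ^ 2 := by
            calc ((n:ℝ) - 1) ^ 2 + 1 = ∑ v, outdeg A v ^ 2 := hQ.symm
              _ ≤ a ^ 2 + B ^ 2 := by rw [hQs]; linarith [hBsq]
          have h3 : 0 ≤ (a - 1) * (B - 1) :=
            mul_nonneg (by linarith) (by linarith)
          have h4 : (a - 1) * (B - 1) ≤ 0 := by nlinarith [h2, hBn]
          linarith
        rcases mul_eq_zero.1 habeq with hcase | hcase
        · -- a = 1
          have ha1' : a = 1 := by linarith
          -- pivot at t instead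
          set a' := outdeg A t with ha'
          set B' := ∑ v ∈ univ.erase t, outdeg A v with hB'
          have hB'n : a' + B' = (n:ℝ) := by
            rw [ha', hB', Finset.add_sum_erase _ _ (Finset.mem_univ t), hdtot]
          have hQt : ∑ v, outdeg A v ^ 2 = a' ^ 2 + ∑ v ∈ univ.erase t, outdeg A v ^ 2 :=
            (Finset.add_sum_erase _ _ (Finset.mem_univ t)).symm
          have hB'sq : ∑ v ∈ univ.erase t, outdeg A v ^ 2 ≤ B' ^ 2 :=
            aux_sum_sq_le _ _ fun i _ => hd0 i
          have ha'1 : 1 ≤ a' := hdS1 t ht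
          have hB'1 : 1 ≤ B' := by
            calc (1:ℝ) = a := ha1'.symm
              _ ≤ B' := Finset.single_le_sum (fun i _ => hd0 i)
                (Finset.mem_erase.2 ⟨hst, Finset.mem_univ s⟩)
          have habeq' : (a' - 1) * (B' - 1) = 0 := by
            have h2 : ((n:ℝ) - 1) ^ 2 + 1 ≤ a' ^ 2 + B' ^ 2 := by
              calc ((n:ℝ) - 1) ^ 2 + 1 = ∑ v, outdeg A v ^ 2 := hQ.symm
                _ ≤ a' ^ 2 + B' ^ 2 := by rw [hQt]; linarith [hB'sq]
            have h3 : 0 ≤ (a' - 1) * (B' - 1) :=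
              mul_nonneg (by linarith) (by linarith)
            have h4 : (a' - 1) * (B' - 1) ≤ 0 := by nlinarith [h2, hB'n]
            linarith
          rcases mul_eq_zero.1 habeq' with hcase' | hcase'
          · -- a = 1 and a' = 1 : contradiction
            exfalso
            have ha'1' : a' = 1 := by linarith
            -- equality in the s-chain
            have hEsum : ∑ v ∈ univ.erase s, outdeg A v ^ 2 = B ^ 2 := by
              have h2 : ((n:ℝ) - 1) ^ 2 + 1 ≤ a ^ 2 + B ^ 2 := by
                calc ((n:ℝ) - 1) ^ 2 + 1 = ∑ v, outdeg A v ^ 2 := hQ.symm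
                  _ ≤ a ^ 2 + B ^ 2 := by rw [hQs]; linarith [hBsq]
              have h4 : a ^ 2 + B ^ 2 ≤ ((n:ℝ) - 1) ^ 2 + 1 := by
                nlinarith [mul_nonneg (by linarith : (0:ℝ) ≤ a - 1)
                  (by linarith : (0:ℝ) ≤ B - 1)]
              have h5 : a ^ 2 + B ^ 2 = ((n:ℝ) - 1) ^ 2 + 1 := le_antisymm h4 h2
              have := hQs
              nlinarith
            have hBval : B = (n:ℝ) - 1 := by linarith
            have htmem : t ∈ univ.erase s :=
              Finset.mem_erase.2 ⟨hst.symm, Finset.mem_univ t⟩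
            have hsum2 : ∑ v ∈ (univ.erase s).erase t, outdeg A v = (n:ℝ) - 2 := by
              have h := Finset.add_sum_erase _ (outdeg A) htmem
              rw [← hB] at h
              rw [← ha'] at h
              rw [ha'1', hBval] at h
              linarith
            have hsum2sq : ∑ v ∈ (univ.erase s).erase t, outdeg A v ^ 2
                = ((n:ℝ) - 1) ^ 2 - 1 := by
              have h := Finset.add_sum_erase _ (fun v => outdeg A v ^ 2) htmem
              rw [hEsum, ← ha', ha'1', hBval] at h
              linarith
            have hle : ∑ v ∈ (univ.erase s).erase t, outdeg A v ^ 2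
                ≤ (∑ v ∈ (univ.erase s).erase t, outdeg A v) ^ 2 :=
              aux_sum_sq_le _ _ fun i _ => hd0 i
            rw [hsum2sq, hsum2] at hle
            nlinarith
          · -- B' = 1
            have hB'1' : B' = 1 := by linarith
            exact ⟨t, ht, key t s ht hs hst.symm hB'1'⟩
        · -- B = 1
          have hB1' : B = 1 := by linarith
          exact ⟨s, hs, key s t hs ht hst hB1'⟩
      · rintro ⟨p, hp, hstar⟩
        have hq : ∃ q, q ∈ S ∧ q ≠ p := by
          rcases hS with rfl
          rcases Finset.mem_insert.1 hp with rfl | hp'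
          · exact ⟨t, ht, hst.symm⟩
          · rw [Finset.mem_singleton] at hp'; subst hp'
            exact ⟨s, hs, hst⟩
        obtain ⟨q, hqS, hqp⟩ := hq
        rw [hE, hOS p q hp hqS (Ne.symm hqp) hstar]
end

section
/- Let G ∈ 𝒢_n^m whose strong component G* is a generalized ∞-digraph ∞[m₁,…,m_t] with common vertex v and with 2 = m₁ = ⋯ = m_s < m_{s+1} ≤ ⋯ ≤ m_t (thus m = Σ_{i=1}^t m_i − t + 1, the vertex v has within-S outdegree t ≥ 2, every other vertex of S has within-S outdegree 1, and c₂(G*) = 2s), and let 0 ≤ α < 1. Then α²(m − 1 + t²) + α²(n − m) + 2s(1−α)² ≤ E_α(G) ≤ α²(n − m + t)² + α²(m − 1) + 2s(1−α)². For 0 < α < 1, the lower bound is attained if and only if every hung tree is an in-tree with root at its vertex of S, and the upper bound is attained if and only if all hung trees are trivial except an out-star of size n−m+1 hung with centre at the common vertex v. -/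
open Polynomial Matrix Finset

/-- The induced subdigraph of `A` on `S` is the generalized `∞`-digraph `∞[m₁,…,m_t]` with
common vertex `v`: `t ≥ 2` directed cycles of lengths `mseq i ≥ 2` passing through exactly
one common vertex `v` and otherwise pairwise disjoint, covering `S`. -/
def IsGenInfty {V : Type*} (A : Matrix V V ℝ) (S : Finset V) (v : V) (t : ℕ)
    (mseq : Fin t → ℕ) : Prop :=
  v ∈ S ∧ 2 ≤ t ∧ (∀ i, 2 ≤ mseq i) ∧
  ∃ c : Fin t → ℕ → V,
    (∀ i, c i 0 = v) ∧
    (∀ i, ∀ k l, k < mseq i → l < mseq i → c i k = c i l → k = l) ∧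
    (∀ i j, i ≠ j → ∀ k l, k < mseq i → l < mseq j → c i k = c j l → c i k = v) ∧
    (∀ w, w ∈ S ↔ ∃ i, ∃ k < mseq i, c i k = w) ∧
    (∀ u w, u ∈ S → w ∈ S →
      (A u w = 1 ↔ ∃ i, ∃ k < mseq i, c i k = u ∧ c i ((k + 1) % mseq i) = w))

section Helpers

lemma sum01_card {β : Type*} (T : Finset β) (f : β → ℝ)
    (h : ∀ w ∈ T, f w = 0 ∨ f w = 1) :
    ∑ w ∈ T, f w = ((T.filter (fun w => f w = 1)).card : ℝ) := by
  classical
  rw [← Finset.sum_filter_add_sum_filter_not T (fun w => f w = 1)]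
  rw [Finset.sum_congr rfl (fun w hw => (Finset.mem_filter.mp hw).2)]
  have h0 : ∑ w ∈ T.filter (fun w => ¬ f w = 1), f w = 0 := by
    apply Finset.sum_eq_zero
    intro w hw
    rcases h w (Finset.mem_filter.mp hw).1 with h'|h'
    · exact h'
    · exact absurd h' (Finset.mem_filter.mp hw).2
  rw [h0, Finset.sum_const, nsmul_eq_mul, mul_one, add_zero]


lemma card_filter_fin_lt (t s : ℕ) (hs : s ≤ t) :
    (Finset.univ.filter (fun i : Fin t => i.val < s)).card = s := by
  have h : Finset.univ.filter (fun i : Fin t => i.val < s)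
      = Finset.map (Fin.castLEEmb hs) Finset.univ := by
    ext i
    simp only [Finset.mem_filter, Finset.mem_univ, true_and, Finset.mem_map]
    constructor
    · intro h
      exact ⟨⟨i.val, h⟩, rfl⟩
    · rintro ⟨j, -, rfl⟩
      simpa using j.isLt
  rw [h, Finset.card_map, Finset.card_univ, Fintype.card_fin]


lemma fiber_arcs {V : Type*} [Fintype V] [DecidableEq V] (A : Matrix V V ℝ) (r : V → V) (s : V)
    (h01 : ∀ u v, A u v = 0 ∨ A u v = 1)
    (hsym : ∀ u v, r u = r v → A u v = 1 → A v u = 0)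
    (htree : (fiberGraph A r s).IsTree) :
    ∑ u ∈ univ.filter (fun u => r u = s), ∑ w ∈ univ.filter (fun w => r w = s), A u w
      = (fibCard r s : ℝ) - 1 := by
  classical
  have hloop : ∀ u, A u u = 0 := by
    intro u
    rcases h01 u u with h|h
    · exact h
    · exact hsym u u rfl h
  have hmem : ∀ x : V, x ∈ univ.filter (fun v => r v = s) ↔ r x = s := by
    intro x; simp
  rw [Finset.sum_subtype _ hmem (fun u => ∑ w ∈ univ.filter (fun w => r w = s), A u w)]
  have : ∀ u : {v : V // r v = s},
      ∑ w ∈ univ.filter (fun w => r w = s), A u.1 w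
      = ∑ w : {v : V // r v = s}, A u.1 w.1 :=
    fun u => Finset.sum_subtype _ hmem (fun w => A u.1 w)
  rw [Finset.sum_congr rfl (fun u _ => this u)]
  have hprod : (∑ p : {v : V // r v = s} × {v : V // r v = s}, A p.1.1 p.2.1)
      = ∑ u : {v : V // r v = s}, ∑ w : {v : V // r v = s}, A u.1 w.1 := Fintype.sum_prod_type (f := fun p : {v : V // r v = s} × {v : V // r v = s} => A p.1.1 p.2.1)
  rw [← hprod]
  rw [sum01_card univ (fun p : {v : V // r v = s} × {v : V // r v = s} => A p.1.1 p.2.1)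
    (fun p _ => h01 p.1.1 p.2.1)]
  have hfib : ∀ u w : {v : V // r v = s}, r u.1 = r w.1 := by
    intro u w; rw [u.2, w.2]
  haveI : Fintype (fiberGraph A r s).edgeSet := Fintype.ofFinite _
  have hcard : (univ.filter (fun p : {v : V // r v = s} × {v : V // r v = s} => A p.1.1 p.2.1 = 1)).card
      = (fiberGraph A r s).edgeFinset.card := by
    refine Finset.card_bij (fun (p : {v : V // r v = s} × {v : V // r v = s}) _ => s(p.1, p.2)) ?_ ?_ ?_
    · rintro ⟨u, w⟩ hp
      simp only [Finset.mem_filter] at hp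
      have h1 : A u.1 w.1 = 1 := hp.2
      have hne : u ≠ w := by
        rintro rfl
        rw [hloop u.1] at h1; norm_num at h1
      simp only [SimpleGraph.mem_edgeFinset, SimpleGraph.mem_edgeSet]
      exact ⟨hne, Or.inl h1⟩
    · rintro ⟨u, w⟩ hp ⟨u', w'⟩ hp' heq
      simp only [Finset.mem_filter] at hp hp'
      rw [Sym2.mk_eq_mk_iff] at heq
      rcases heq with h|h
      · exact h
      · -- swap case
        exfalso
        have h1 : u = w' := congrArg Prod.fst h
        have h2 : w = u' := congrArg Prod.snd h
        have hz := hsym u.1 w.1 (hfib u w) hp.2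
        rw [← h2, ← h1] at hp'
        rw [hz] at hp'
        norm_num at hp'
    · intro e he
      simp only [SimpleGraph.mem_edgeFinset] at he
      induction e with
      | _ u w =>
        rw [SimpleGraph.mem_edgeSet] at he
        rcases he.2 with h|h
        · exact ⟨(u, w), by simpa using h, rfl⟩
        · exact ⟨(w, u), by simpa using h, Sym2.eq_swap⟩
  rw [hcard]
  have := htree.card_edgeFinset
  have hcard2 : Fintype.card {v : V // r v = s} = fibCard r s := Fintype.card_subtype _
  rw [hcard2] at this
  have h1 : 1 ≤ fibCard r s := by omega
  push_cast [← this]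
  ring

lemma Ealpha_expand {V : Type*} [Fintype V] [DecidableEq V] (α : ℝ) (A : Matrix V V ℝ)
    (hd : ∀ v, A v v = 0) :
    Ealpha α A = α^2 * ∑ u, (outdeg A u)^2 + (1-α)^2 * Matrix.trace (A * A) := by
  unfold Ealpha
  rw [Matrix.trace, Matrix.trace]
  simp only [Matrix.diag_apply, Matrix.mul_apply, Aalpha, Matrix.add_apply, Matrix.smul_apply,
    Matrix.diagonal_apply, smul_eq_mul]
  have key : ∀ u : V, ∑ w, ((α * (if u = w then outdeg A u else 0) + (1-α) * A u w) *
      (α * (if w = u then outdeg A w else 0) + (1-α) * A w u))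
      = α^2 * (outdeg A u)^2 + (1-α)^2 * ∑ w, A u w * A w u := by
    intro u
    have : ∀ w, ((α * (if u = w then outdeg A u else 0) + (1-α) * A u w) *
      (α * (if w = u then outdeg A w else 0) + (1-α) * A w u))
      = (if u = w then α^2 * (outdeg A u)^2 + α*(1-α)*(outdeg A u * A u u + A u u * outdeg A u) else 0)
        + (1-α)^2 * (A u w * A w u) := by
      intro w
      by_cases h : u = w
      · subst h; simp [hd u]; ring
      · simp [h, Ne.symm h]; ring
    rw [Finset.sum_congr rfl (fun w _ => this w)]
    rw [Finset.sum_add_distrib, Finset.sum_ite_eq univ u _, Finset.mul_sum]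
    simp [hd u]
  rw [Finset.sum_congr rfl (fun u _ => key u), Finset.sum_add_distrib, ← Finset.mul_sum,
    ← Finset.mul_sum]


section Infty
variable {V : Type*} [Fintype V] [DecidableEq V] (A : Matrix V V ℝ) (S : Finset V)
  (v : V) (t : ℕ) (mseq : Fin t → ℕ) (c : Fin t → ℕ → V)

lemma infty_dStar_v
    (h01 : ∀ u w, A u w = 0 ∨ A u w = 1)
    (hm2 : ∀ i, 2 ≤ mseq i)
    (hvS : v ∈ S)
    (hc0 : ∀ i, c i 0 = v)
    (hcinj : ∀ i, ∀ k l, k < mseq i → l < mseq i → c i k = c i l → k = l)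
    (hcsep : ∀ i j, i ≠ j → ∀ k l, k < mseq i → l < mseq j → c i k = c j l → c i k = v)
    (hccov : ∀ w, w ∈ S ↔ ∃ i, ∃ k < mseq i, c i k = w)
    (hcadj : ∀ u w, u ∈ S → w ∈ S →
      (A u w = 1 ↔ ∃ i, ∃ k < mseq i, c i k = u ∧ c i ((k + 1) % mseq i) = w)) :
    dStar A S v = t := by
  classical
  have h1lt : ∀ i, 1 < mseq i := fun i => lt_of_lt_of_le one_lt_two (hm2 i)
  have h0lt : ∀ i, 0 < mseq i := fun i => lt_of_lt_of_le (by norm_num) (hm2 i)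
  have hc1S : ∀ i, c i 1 ∈ S := fun i => (hccov _).mpr ⟨i, 1, h1lt i, rfl⟩
  have h1mod : ∀ i, (0 + 1) % mseq i = 1 := fun i => Nat.mod_eq_of_lt (h1lt i)
  have hAv1 : ∀ i, A v (c i 1) = 1 := fun i =>
    (hcadj v _ hvS (hc1S i)).mpr ⟨i, 0, h0lt i, hc0 i, by rw [h1mod]⟩
  have hc1ne : ∀ i, c i 1 ≠ v := by
    intro i h
    have := hcinj i 1 0 (h1lt i) (h0lt i) (h.trans (hc0 i).symm)
    omega
  unfold dStar
  rw [sum01_card S (fun w => A v w) (fun w _ => h01 v w)]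
  have hset : S.filter (fun w => A v w = 1) = Finset.image (fun i => c i 1) univ := by
    ext w
    simp only [mem_filter, mem_image, mem_univ, true_and]
    constructor
    · rintro ⟨hwS, hA⟩
      obtain ⟨i, k, hk, hik, hik1⟩ := (hcadj v w hvS hwS).mp hA
      have hk0 : k = 0 := hcinj i k 0 hk (h0lt i) (hik.trans (hc0 i).symm)
      subst hk0
      exact ⟨i, by rw [← hik1, h1mod]⟩
    · rintro ⟨i, rfl⟩
      exact ⟨hc1S i, hAv1 i⟩
  have hinj : Function.Injective (fun i => c i 1) := by
    intro i j h
    by_contra hne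
    exact hc1ne i (hcsep i j hne 1 1 (h1lt i) (h1lt j) h)
  rw [hset, Finset.card_image_of_injective _ hinj, Finset.card_univ, Fintype.card_fin]

lemma infty_dStar_ne
    (h01 : ∀ u w, A u w = 0 ∨ A u w = 1)
    (hm2 : ∀ i, 2 ≤ mseq i)
    (hc0 : ∀ i, c i 0 = v)
    (hcinj : ∀ i, ∀ k l, k < mseq i → l < mseq i → c i k = c i l → k = l)
    (hcsep : ∀ i j, i ≠ j → ∀ k l, k < mseq i → l < mseq j → c i k = c j l → c i k = v)
    (hccov : ∀ w, w ∈ S ↔ ∃ i, ∃ k < mseq i, c i k = w)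
    (hcadj : ∀ u w, u ∈ S → w ∈ S →
      (A u w = 1 ↔ ∃ i, ∃ k < mseq i, c i k = u ∧ c i ((k + 1) % mseq i) = w))
    (u : V) (huS : u ∈ S) (huv : u ≠ v) :
    dStar A S u = 1 := by
  classical
  obtain ⟨i, k, hk, hik⟩ := (hccov u).mp huS
  have hmod : (k + 1) % mseq i < mseq i := Nat.mod_lt _ (lt_of_lt_of_le (by norm_num) (hm2 i))
  have hwS : c i ((k + 1) % mseq i) ∈ S := (hccov _).mpr ⟨i, _, hmod, rfl⟩
  unfold dStar
  rw [sum01_card S (fun w => A u w) (fun w _ => h01 u w)]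
  have hset : S.filter (fun w => A u w = 1) = {c i ((k + 1) % mseq i)} := by
    ext w
    simp only [mem_filter, mem_singleton]
    constructor
    · rintro ⟨hwS', hA⟩
      obtain ⟨j, l, hl, hjl, hjl1⟩ := (hcadj u w huS hwS').mp hA
      have hij : j = i := by
        by_contra hne
        exact huv (hik ▸ (hcsep i j (Ne.symm hne) k l hk hl (hik.trans hjl.symm)).symm ▸
          (hcsep i j (Ne.symm hne) k l hk hl (hik.trans hjl.symm)))
      subst hij
      have : l = k := hcinj j l k hl hk (hjl.trans hik.symm)
      subst this
      exact hjl1.symm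
    · rintro rfl
      exact ⟨hwS, (hcadj u _ huS hwS).mpr ⟨i, k, hk, hik, rfl⟩⟩
  rw [hset, Finset.card_singleton, Nat.cast_one]
end Infty

section Trace
variable {V : Type*} [Fintype V] [DecidableEq V] (A : Matrix V V ℝ) (S : Finset V)
  (v : V) (t : ℕ) (mseq : Fin t → ℕ) (c : Fin t → ℕ → V)

lemma infty_trace (s : ℕ)
    (h01 : ∀ u w, A u w = 0 ∨ A u w = 1)
    (hloop : ∀ u, A u u = 0)
    (hS2 : ∀ u w, A u w = 1 → A w u = 1 → u ∈ S ∧ w ∈ S)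
    (hm2 : ∀ i, 2 ≤ mseq i)
    (hvS : v ∈ S)
    (hc0 : ∀ i, c i 0 = v)
    (hcinj : ∀ i, ∀ k l, k < mseq i → l < mseq i → c i k = c i l → k = l)
    (hcsep : ∀ i j, i ≠ j → ∀ k l, k < mseq i → l < mseq j → c i k = c j l → c i k = v)
    (hccov : ∀ w, w ∈ S ↔ ∃ i, ∃ k < mseq i, c i k = w)
    (hcadj : ∀ u w, u ∈ S → w ∈ S →
      (A u w = 1 ↔ ∃ i, ∃ k < mseq i, c i k = u ∧ c i ((k + 1) % mseq i) = w))
    (hcard2 : (univ.filter (fun i : Fin t => mseq i = 2)).card = s) :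
    Matrix.trace (A * A) = 2 * s := by
  classical
  have h1lt : ∀ i, 1 < mseq i := fun i => lt_of_lt_of_le one_lt_two (hm2 i)
  have h0lt : ∀ i, 0 < mseq i := fun i => lt_of_lt_of_le (by norm_num) (hm2 i)
  have hc1S : ∀ i, c i 1 ∈ S := fun i => (hccov _).mpr ⟨i, 1, h1lt i, rfl⟩
  have hc1ne : ∀ i, c i 1 ≠ v := by
    intro i h
    have := hcinj i 1 0 (h1lt i) (h0lt i) (h.trans (hc0 i).symm)
    omega
  have hexp : Matrix.trace (A * A) = ∑ p : V × V, A p.1 p.2 * A p.2 p.1 := by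
    rw [Matrix.trace]
    simp only [Matrix.diag_apply, Matrix.mul_apply]
    exact (Fintype.sum_prod_type (f := fun p : V × V => A p.1 p.2 * A p.2 p.1)).symm
  rw [hexp, sum01_card univ _ (fun p _ => by
    rcases h01 p.1 p.2 with h|h <;> rcases h01 p.2 p.1 with h'|h' <;>
      simp [h, h'])]
  have hiff : ∀ p : V × V, (A p.1 p.2 * A p.2 p.1 = 1) ↔ (A p.1 p.2 = 1 ∧ A p.2 p.1 = 1) := by
    intro p
    rcases h01 p.1 p.2 with h|h <;> rcases h01 p.2 p.1 with h'|h' <;> simp [h, h']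
  rw [Finset.filter_congr (fun p _ => hiff p)]
  have hAv1 : ∀ i : Fin t, A v (c i 1) = 1 := fun i =>
    (hcadj v _ hvS (hc1S i)).mpr ⟨i, 0, h0lt i, hc0 i, by
      rw [Nat.mod_eq_of_lt (h1lt i)]⟩
  have hA1v : ∀ i : Fin t, mseq i = 2 → A (c i 1) v = 1 := by
    intro i h2i
    refine (hcadj _ v (hc1S i) hvS).mpr ⟨i, 1, h1lt i, rfl, ?_⟩
    rw [h2i]
    exact hc0 i
  have hcard : ((univ.filter (fun i : Fin t => mseq i = 2)) ×ˢ (univ : Finset Bool)).card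
      = (univ.filter (fun p : V × V => A p.1 p.2 = 1 ∧ A p.2 p.1 = 1)).card := by
    apply Finset.card_bij
      (fun q _ => if q.2 then ((v, c q.1 1) : V × V) else (c q.1 1, v))
    · rintro ⟨i, b⟩ hq
      have h2i : mseq i = 2 := by simpa using hq
      cases b
      · simp only [Bool.false_eq_true, if_false, Finset.mem_filter, Finset.mem_univ, true_and]
        exact ⟨hA1v i h2i, hAv1 i⟩
      · simp only [if_true, Finset.mem_filter, Finset.mem_univ, true_and]
        exact ⟨hAv1 i, hA1v i h2i⟩
    · rintro ⟨i, b⟩ hq ⟨j, b'⟩ hq' heq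
      cases b <;> cases b' <;>
        simp only [if_true, if_false, Prod.mk.injEq, Bool.false_eq_true] at heq
      · have hij : i = j := by
          by_contra hne
          exact hc1ne i (hcsep i j hne 1 1 (h1lt i) (h1lt j) heq.1)
        rw [hij]
      · exact absurd heq.1 (hc1ne i)
      · exact absurd heq.1.symm (hc1ne j)
      · have hij : i = j := by
          by_contra hne
          exact hc1ne i (hcsep i j hne 1 1 (h1lt i) (h1lt j) heq.2)
        rw [hij]
    · rintro ⟨u, w⟩ hp
      simp only [Finset.mem_filter, Finset.mem_univ, true_and] at hp
      obtain ⟨huw, hwu⟩ := hp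
      obtain ⟨huS, hwS⟩ := hS2 u w huw hwu
      have hne : u ≠ w := by
        rintro rfl
        rw [hloop u] at huw; norm_num at huw
      obtain ⟨i, k, hk, hik, hik1⟩ := (hcadj u w huS hwS).mp huw
      obtain ⟨j, l, hl, hjl, hjl1⟩ := (hcadj w u hwS huS).mp hwu
      have hij : j = i := by
        by_contra hne'
        have hu' : u = v := by
          have h := hcsep j i hne' ((l + 1) % mseq j) k (Nat.mod_lt _ (h0lt j)) hk
            (hjl1.trans hik.symm)
          exact hjl1 ▸ h
        have hw' : w = v := by
          have h := hcsep i j (fun hh => hne' hh.symm) ((k + 1) % mseq i) l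
            (Nat.mod_lt _ (h0lt i)) hl (hik1.trans hjl.symm)
          exact hik1 ▸ h
        exact hne (hu'.trans hw'.symm)
      subst hij
      have hlk : l = (k + 1) % mseq j :=
        hcinj j l _ hl (Nat.mod_lt _ (h0lt j)) (hjl.trans hik1.symm)
      have hkk : (l + 1) % mseq j = k :=
        hcinj j _ k (Nat.mod_lt _ (h0lt j)) hk (hjl1.trans hik.symm)
      have hk2 : (k + 2) % mseq j = k := by
        rw [hlk] at hkk
        rwa [Nat.mod_add_mod, show k + 1 + 1 = k + 2 from rfl] at hkk
      have h2j := hm2 j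
      have hm2j : mseq j = 2 := by
        rcases lt_or_ge (k + 2) (mseq j) with h|h
        · rw [Nat.mod_eq_of_lt h] at hk2; omega
        · have hlt : k + 2 - mseq j < mseq j := by omega
          rw [Nat.mod_eq_sub_mod h, Nat.mod_eq_of_lt hlt] at hk2
          omega
      have hk01 : k = 0 ∨ k = 1 := by omega
      rcases hk01 with rfl|rfl
      · refine ⟨(j, true), by simp [hm2j], ?_⟩
        simp only [if_true]
        have hmod : (0 + 1) % mseq j = 1 := Nat.mod_eq_of_lt (h1lt j)
        rw [hmod] at hik1
        rw [Prod.mk.injEq]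
        exact ⟨(hc0 j).symm.trans hik, hik1⟩
      · refine ⟨(j, false), by simp [hm2j], ?_⟩
        simp only [Bool.false_eq_true, if_false]
        have hmod : (1 + 1) % mseq j = 0 := by rw [hm2j]
        rw [hmod] at hik1
        rw [Prod.mk.injEq]
        exact ⟨hik, (hc0 j).symm.trans hik1⟩
  rw [← hcard, Finset.card_product, hcard2, Finset.card_univ]
  simp [mul_comm]
end Trace


end Helpers

set_option maxHeartbeats 4000000 in
/-- For `G ∈ 𝒢_n^m` whose strong component is a generalized `∞`-digraph `∞[m₁,…,m_t]`
with common vertex `v` and `2 = m₁ = ⋯ = m_s < m_{s+1} ≤ ⋯ ≤ m_t`,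
`α²(m-1+t²) + α²(n-m) + 2s(1-α)² ≤ E_α(G) ≤ α²(n-m+t)² + α²(m-1) + 2s(1-α)²`; for
`0 < α < 1` the lower bound is attained iff all hung trees are in-trees, and the upper
bound iff all hung trees are trivial except an out-star of size `n-m+1` centred at `v`. -/
theorem stmt15 {V : Type*} [Fintype V] [DecidableEq V] (A : Matrix V V ℝ) (S : Finset V)
    (r : V → V) (n m : ℕ) (hG : IsGnm A S r n m)
    (v : V) (t s : ℕ) (mseq : Fin t → ℕ) (hinf : IsGenInfty A S v t mseq)
    (hmono : Monotone mseq) (hs : s ≤ t)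
    (h2 : ∀ i : Fin t, (i : ℕ) < s → mseq i = 2)
    (h3 : ∀ i : Fin t, s ≤ (i : ℕ) → 3 ≤ mseq i)
    (α : ℝ) (hα0 : 0 ≤ α) (hα1 : α < 1) :
    (α ^ 2 * ((m : ℝ) - 1 + (t : ℝ) ^ 2) + α ^ 2 * ((n : ℝ) - m)
        + 2 * (s : ℝ) * (1 - α) ^ 2 ≤ Ealpha α A ∧
      Ealpha α A ≤ α ^ 2 * ((n : ℝ) - m + t) ^ 2 + α ^ 2 * ((m : ℝ) - 1)
        + 2 * (s : ℝ) * (1 - α) ^ 2) ∧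
    (0 < α →
      ((Ealpha α A = α ^ 2 * ((m : ℝ) - 1 + (t : ℝ) ^ 2) + α ^ 2 * ((n : ℝ) - m)
          + 2 * (s : ℝ) * (1 - α) ^ 2 ↔ InTrees A S r) ∧
       (Ealpha α A = α ^ 2 * ((n : ℝ) - m + t) ^ 2 + α ^ 2 * ((m : ℝ) - 1)
          + 2 * (s : ℝ) * (1 - α) ^ 2 ↔ OutStarAt A S r v))) := by
  classical
  obtain ⟨hvS, ht2, hm2, c, hc0, hcinj, hcsep, hccov, hcadj⟩ := hinf
  have h01 := hG.zero_one
  have hloop := hG.loopless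
  have hrmem := hG.r_mem
  have hrfix := hG.r_fix
  have harc := hG.arc_cases
  have hfsym := hG.fiber_no_symm
  have hAnn : ∀ u w, 0 ≤ A u w := fun u w => by rcases h01 u w with h | h <;> simp [h]
  set X : V → ℝ := fun u => ∑ w ∈ univ.filter (fun w => r w = r u), A u w with hXdef
  set dd : V → ℝ := fun u => if u ∈ S then dStar A S u else 0 with hdddef
  have hXapp : ∀ u, X u = ∑ w ∈ univ.filter (fun w => r w = r u), A u w := fun u => by
    rw [hXdef]
  have hddapp : ∀ u, dd u = if u ∈ S then dStar A S u else 0 := fun u => by rw [hdddef]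
  have hXnn : ∀ u, 0 ≤ X u := fun u => by
    rw [hXapp u]; exact Finset.sum_nonneg (fun w _ => hAnn u w)
  have hX01 : ∀ u, X u = 0 ∨ 1 ≤ X u := by
    intro u
    rw [hXapp u]
    by_cases hz : ∀ w ∈ univ.filter (fun w => r w = r u), A u w = 0
    · left; exact Finset.sum_eq_zero hz
    · right
      push_neg at hz
      obtain ⟨w, hw, hne⟩ := hz
      have h1 : A u w = 1 := (h01 u w).resolve_left hne
      calc (1 : ℝ) = A u w := h1.symm
        _ ≤ _ := Finset.single_le_sum (fun x _ => hAnn u x) hw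
  have hddv : dd v = t := by
    rw [hddapp v, if_pos hvS]
    exact infty_dStar_v A S v t mseq c h01 hm2 hvS hc0 hcinj hcsep hccov hcadj
  have hdd1 : ∀ u ∈ S, u ≠ v → dd u = 1 := fun u hu hne => by
    rw [hddapp u, if_pos hu]
    exact infty_dStar_ne A S v t mseq c h01 hm2 hc0 hcinj hcsep hccov hcadj u hu hne
  have hdd0 : ∀ u, u ∉ S → dd u = 0 := fun u hu => by rw [hddapp u, if_neg hu]
  have ht2R : (2 : ℝ) ≤ t := by exact_mod_cast ht2
  have hddnn : ∀ u, 0 ≤ dd u := by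
    intro u
    rw [hddapp u]
    split
    · exact Finset.sum_nonneg (fun w _ => hAnn u w)
    · exact le_refl 0
  have hddle : ∀ u, dd u ≤ t := by
    intro u
    by_cases hu : u ∈ S
    · by_cases huv : u = v
      · rw [huv, hddv]
      · rw [hdd1 u hu huv]; linarith
    · rw [hdd0 u hu]; linarith
  have houtdeg : ∀ u, outdeg A u = dd u + X u := by
    intro u
    by_cases hu : u ∈ S
    · rw [hddapp u, if_pos hu]
      have hru : r u = u := hrfix u hu
      rw [outdeg, ← Finset.sum_filter_add_sum_filter_not univ (fun w => w ∈ S) (fun w => A u w)]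
      have hfil : univ.filter (fun w => w ∈ S) = S := by ext w; simp
      have h1 : ∑ w ∈ univ.filter (fun w => w ∈ S), A u w = dStar A S u := by
        rw [hfil]; rfl
      have h2 : ∑ w ∈ univ.filter (fun w => ¬ w ∈ S), A u w = X u := by
        rw [hXapp u]
        have hsubset1 : univ.filter (fun w => ¬ w ∈ S ∧ r w = u) ⊆
            univ.filter (fun w => ¬ w ∈ S) := by
          intro w hw
          simp only [Finset.mem_filter] at hw ⊢
          exact ⟨hw.1, hw.2.1⟩
        have hsubset2 : univ.filter (fun w => ¬ w ∈ S ∧ r w = u) ⊆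
            univ.filter (fun w => r w = r u) := by
          intro w hw
          simp only [Finset.mem_filter, hru] at hw ⊢
          exact ⟨hw.1, hw.2.2⟩
        have he1 : ∑ w ∈ univ.filter (fun w => ¬ w ∈ S ∧ r w = u), A u w
            = ∑ w ∈ univ.filter (fun w => ¬ w ∈ S), A u w := by
          apply Finset.sum_subset hsubset1
          intro w hw hw'
          simp only [Finset.mem_filter] at hw hw'
          rcases h01 u w with h | h
          · exact h
          · exfalso
            rcases harc u w h with hc | hc
            · exact hw.2 hc.2
            · exact hw' ⟨hw.1, ⟨hw.2, by rw [← hc, hru]⟩⟩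
        have he2 : ∑ w ∈ univ.filter (fun w => ¬ w ∈ S ∧ r w = u), A u w
            = ∑ w ∈ univ.filter (fun w => r w = r u), A u w := by
          apply Finset.sum_subset hsubset2
          intro w hw hw'
          simp only [Finset.mem_filter, Finset.mem_univ, true_and, hru] at hw hw'
          by_cases hwS : w ∈ S
          · have : w = u := by rw [← hrfix w hwS, hw]
            rw [this]; exact hloop u
          · exact absurd ⟨hwS, hw⟩ hw'
        rw [← he1, he2]
      rw [h1, h2]
    · rw [hdd0 u hu, zero_add, hXapp u, outdeg]
      symm
      apply Finset.sum_subset (Finset.filter_subset _ _)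
      intro w _ hw'
      simp only [Finset.mem_filter, Finset.mem_univ, true_and] at hw'
      rcases h01 u w with h | h
      · exact h
      · exfalso
        rcases harc u w h with hc | hc
        · exact hu hc.1
        · exact hw' hc.symm
  have hm2n : 2 ≤ m := hG.two_le_m
  have hmR : (1 : ℝ) ≤ m := by exact_mod_cast (by omega : 1 ≤ m)
  have hmnR : (m : ℝ) < n := by exact_mod_cast hG.m_lt_n
  have hddsq : ∑ u, dd u ^ 2 = (t : ℝ) ^ 2 + ((m : ℝ) - 1) := by
    rw [← Finset.sum_subset (Finset.subset_univ S)
      (fun u _ hu => by rw [hdd0 u hu]; ring)]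
    rw [← Finset.add_sum_erase S _ hvS, hddv]
    have herase : ∑ u ∈ S.erase v, dd u ^ 2 = ∑ _u ∈ S.erase v, (1 : ℝ) :=
      Finset.sum_congr rfl (fun u hu => by
        rw [hdd1 u (Finset.mem_of_mem_erase hu) (Finset.ne_of_mem_erase hu)]; ring)
    rw [herase, Finset.sum_const, Finset.card_erase_of_mem hvS, hG.card_S,
      nsmul_eq_mul, mul_one, Nat.cast_sub (by omega : 1 ≤ m), Nat.cast_one]
  have hfib : ∀ s0 ∈ S, ∑ u ∈ univ.filter (fun u => r u = s0), X u
      = (fibCard r s0 : ℝ) - 1 := by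
    intro s0 hs0
    rw [← fiber_arcs A r s0 h01 hfsym (hG.fiber_tree s0 hs0)]
    apply Finset.sum_congr rfl
    intro u hu
    have hru : r u = s0 := (Finset.mem_filter.mp hu).2
    rw [hXapp u]
    simp only [hru]
  have hXsum : ∑ u, X u = (n : ℝ) - m := by
    rw [← Finset.sum_fiberwise_of_maps_to (fun x (_ : x ∈ (univ : Finset V)) => hrmem x) X]
    rw [Finset.sum_congr rfl (fun s0 hs0 => hfib s0 hs0), Finset.sum_sub_distrib]
    have hn' : ∑ s0 ∈ S, fibCard r s0 = n := by
      rw [← hG.card_V, ← Finset.card_univ]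
      exact (Finset.card_eq_sum_card_fiberwise
        (fun x (_ : x ∈ (univ : Finset V)) => hrmem x)).symm
    have hn : ∑ s0 ∈ S, (fibCard r s0 : ℝ) = n := by exact_mod_cast hn'
    rw [hn, Finset.sum_const, hG.card_S, nsmul_eq_mul, mul_one]
  have hS2 : ∀ u w, A u w = 1 → A w u = 1 → u ∈ S ∧ w ∈ S := by
    intro u w hA1 hA2
    rcases harc u w hA1 with h | h
    · exact h
    · have := hfsym u w h hA1
      rw [this] at hA2; norm_num at hA2
  have hfilter2 : (univ.filter (fun i : Fin t => mseq i = 2)).card = s := by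
    have heqf : univ.filter (fun i : Fin t => mseq i = 2)
        = univ.filter (fun i : Fin t => i.val < s) := by
      ext i
      simp only [Finset.mem_filter, Finset.mem_univ, true_and]
      constructor
      · intro h
        by_contra hlt
        have := h3 i (le_of_not_gt hlt)
        omega
      · exact h2 i
    rw [heqf, card_filter_fin_lt t s hs]
  have htr : Matrix.trace (A * A) = 2 * s :=
    infty_trace A S v t mseq c s h01 hloop hS2 hm2 hvS hc0 hcinj hcsep hccov hcadj hfilter2
  have hE : Ealpha α A = α ^ 2 * (∑ u, (dd u + X u) ^ 2) + (1 - α) ^ 2 * (2 * s) := by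
    rw [Ealpha_expand α A hloop, htr,
      Finset.sum_congr rfl (fun u (_ : u ∈ (univ : Finset V)) => by rw [houtdeg u])]
  -- lower bound decomposition
  have hlowdec : ∑ u, (dd u + X u) ^ 2
      = ((t : ℝ) ^ 2 + ((m : ℝ) - 1)) + ((n : ℝ) - m) + ∑ u, X u * (2 * dd u + X u - 1) := by
    have hpt : ∀ u : V, (dd u + X u) ^ 2
        = dd u ^ 2 + X u + X u * (2 * dd u + X u - 1) := fun u => by ring
    rw [Finset.sum_congr rfl (fun u (_ : u ∈ (univ : Finset V)) => hpt u),
      Finset.sum_add_distrib, Finset.sum_add_distrib, hddsq, hXsum]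
  have hlowtermnn : ∀ u, 0 ≤ X u * (2 * dd u + X u - 1) := by
    intro u
    rcases hX01 u with h | h
    · rw [h, zero_mul]
    · nlinarith [hddnn u]
  have hlow : ((t : ℝ) ^ 2 + ((m : ℝ) - 1)) + ((n : ℝ) - m) ≤ ∑ u, (dd u + X u) ^ 2 := by
    rw [hlowdec]
    have := Finset.sum_nonneg (fun u (_ : u ∈ (univ : Finset V)) => hlowtermnn u)
    linarith
  -- upper bound decomposition
  have hcrossnn : ∀ u, 0 ≤ X u * ∑ w ∈ univ.erase u, X w := fun u =>
    mul_nonneg (hXnn u) (Finset.sum_nonneg fun w _ => hXnn w)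
  have hsq : (∑ u, X u) ^ 2 = ∑ u, (X u ^ 2 + X u * ∑ w ∈ univ.erase u, X w) := by
    rw [sq, Finset.sum_mul]
    apply Finset.sum_congr rfl
    intro u _
    rw [← Finset.add_sum_erase univ X (Finset.mem_univ u)]
    ring
  have hupdec : (((n : ℝ) - m) + t) ^ 2 + ((m : ℝ) - 1)
      = ∑ u, (dd u + X u) ^ 2
        + ∑ u, (2 * ((t : ℝ) - dd u) * X u + X u * ∑ w ∈ univ.erase u, X w) := by
    have hexp : ∀ u : V, (dd u + X u) ^ 2
        + (2 * ((t : ℝ) - dd u) * X u + X u * ∑ w ∈ univ.erase u, X w)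
        = dd u ^ 2 + 2 * (t : ℝ) * X u + (X u ^ 2 + X u * ∑ w ∈ univ.erase u, X w) :=
      fun u => by ring
    rw [← Finset.sum_add_distrib,
      Finset.sum_congr rfl (fun u (_ : u ∈ (univ : Finset V)) => hexp u),
      Finset.sum_add_distrib, Finset.sum_add_distrib, ← hsq, hddsq, ← Finset.mul_sum, hXsum]
    ring
  have huptermnn : ∀ u, 0 ≤ 2 * ((t : ℝ) - dd u) * X u + X u * ∑ w ∈ univ.erase u, X w := by
    intro u
    have h1 : 0 ≤ 2 * ((t : ℝ) - dd u) * X u := by nlinarith [hddle u, hXnn u]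
    linarith [hcrossnn u]
  have hup : ∑ u, (dd u + X u) ^ 2 ≤ (((n : ℝ) - m) + t) ^ 2 + ((m : ℝ) - 1) := by
    rw [hupdec]
    have := Finset.sum_nonneg (fun u (_ : u ∈ (univ : Finset V)) => huptermnn u)
    linarith
  -- lower equality characterization
  have hloweq : (∑ u, (dd u + X u) ^ 2 = ((t : ℝ) ^ 2 + ((m : ℝ) - 1)) + ((n : ℝ) - m))
      ↔ InTrees A S r := by
    constructor
    · intro heq
      have hz : ∑ u, X u * (2 * dd u + X u - 1) = 0 := by
        rw [hlowdec] at heq; linarith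
      have hz' : ∀ u ∈ (univ : Finset V), X u * (2 * dd u + X u - 1) = 0 :=
        (Finset.sum_eq_zero_iff_of_nonneg (fun u _ => hlowtermnn u)).mp hz
      have hXS : ∀ u ∈ S, X u = 0 := by
        intro u hu
        rcases hX01 u with h | h
        · exact h
        · exfalso
          have hdu : 1 ≤ dd u := by
            by_cases huv : u = v
            · rw [huv, hddv]; linarith
            · rw [hdd1 u hu huv]
          have := hz' u (Finset.mem_univ u)
          nlinarith
      have hXout : ∀ u, u ∉ S → X u = 1 := by
        have hXle1 : ∀ u, u ∉ S → X u ≤ 1 := by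
          intro u hu
          rcases hX01 u with h | h
          · rw [h]; norm_num
          · have hzu := hz' u (Finset.mem_univ u)
            have hd0 : dd u = 0 := hdd0 u hu
            rw [hd0] at hzu
            nlinarith
        have hsplit : ∑ u ∈ univ.filter (fun u => ¬ u ∈ S), X u = (n : ℝ) - m := by
          have := hXsum
          rw [← Finset.sum_filter_add_sum_filter_not univ (fun u => u ∈ S) X] at this
          have h0 : ∑ u ∈ univ.filter (fun u => u ∈ S), X u = 0 :=
            Finset.sum_eq_zero (fun u hu => hXS u (by simpa using hu))
          rw [h0, zero_add] at this
          exact this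
        have hcardc : ((univ.filter (fun u => ¬ u ∈ S)).card : ℝ) = (n : ℝ) - m := by
          have heqs : univ.filter (fun u => ¬ u ∈ S) = univ \ S := by
            ext w; simp [Finset.mem_sdiff]
          rw [heqs, Finset.card_sdiff_of_subset (Finset.subset_univ S), Finset.card_univ, hG.card_V,
            hG.card_S, Nat.cast_sub (le_of_lt hG.m_lt_n)]
        intro u hu
        have hsum0 : ∑ w ∈ univ.filter (fun w => ¬ w ∈ S), (1 - X w) = 0 := by
          rw [Finset.sum_sub_distrib, Finset.sum_const, hsplit, nsmul_eq_mul, mul_one, hcardc]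
          ring
        have := (Finset.sum_eq_zero_iff_of_nonneg (fun w hw => by
          have := hXle1 w (by simpa using hw); linarith)).mp hsum0 u (by simp [hu])
        linarith
      refine ⟨fun u hu => ?_, fun s0 hs0 => ?_⟩
      · rw [← hXapp u]; exact hXout u hu
      · have h0 := hXS s0 hs0
        rw [hXapp s0] at h0
        simp only [hrfix s0 hs0] at h0
        exact h0
    · intro hIT
      rw [hlowdec]
      have hterm : ∀ u ∈ (univ : Finset V), X u * (2 * dd u + X u - 1) = 0 := by
        intro u _
        by_cases hu : u ∈ S
        · have h0 : X u = 0 := by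
            rw [hXapp u]
            simp only [hrfix u hu]
            exact hIT.2 u hu
          rw [h0, zero_mul]
        · have h1 : X u = 1 := by rw [hXapp u]; exact hIT.1 u hu
          rw [h1, hdd0 u hu]; ring
      rw [Finset.sum_eq_zero hterm]; ring
  -- upper equality characterization
  have hupeq : (∑ u, (dd u + X u) ^ 2 = (((n : ℝ) - m) + t) ^ 2 + ((m : ℝ) - 1))
      ↔ OutStarAt A S r v := by
    constructor
    · intro heq
      have hz : ∑ u, (2 * ((t : ℝ) - dd u) * X u + X u * ∑ w ∈ univ.erase u, X w) = 0 := by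
        linarith [hupdec]
      have hz' : ∀ u ∈ (univ : Finset V),
          2 * ((t : ℝ) - dd u) * X u + X u * ∑ w ∈ univ.erase u, X w = 0 :=
        (Finset.sum_eq_zero_iff_of_nonneg (fun u _ => huptermnn u)).mp hz
      have hXzero : ∀ u, u ≠ v → X u = 0 := by
        have hpos : ∃ u0, 0 < X u0 := by
          by_contra hcon
          push_neg at hcon
          have hle : ∑ u, X u ≤ 0 := Finset.sum_nonpos (fun u _ => hcon u)
          rw [hXsum] at hle; linarith
        obtain ⟨u0, hu0⟩ := hpos
        have hterm := hz' u0 (Finset.mem_univ u0)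
        have h1nn : 0 ≤ 2 * ((t : ℝ) - dd u0) * X u0 := by nlinarith [hddle u0, hXnn u0]
        have ht1 : 2 * ((t : ℝ) - dd u0) * X u0 = 0 := by linarith [hcrossnn u0]
        have ht2' : X u0 * ∑ w ∈ univ.erase u0, X w = 0 := by linarith
        have hrest : ∀ w, w ≠ u0 → X w = 0 := by
          intro w hw
          have hsum0 : ∑ w ∈ univ.erase u0, X w = 0 := by
            rcases mul_eq_zero.mp ht2' with h | h
            · exact absurd h (ne_of_gt hu0)
            · exact h
          exact (Finset.sum_eq_zero_iff_of_nonneg (fun w _ => hXnn w)).mp hsum0 w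
            (Finset.mem_erase.mpr ⟨hw, Finset.mem_univ w⟩)
        have hddu0 : dd u0 = t := by
          rcases mul_eq_zero.mp ht1 with h | h
          · linarith
          · exact absurd h (ne_of_gt hu0)
        have hu0v : u0 = v := by
          by_contra hne
          by_cases hu : u0 ∈ S
          · have := hdd1 u0 hu hne
            rw [this] at hddu0; linarith
          · have := hdd0 u0 hu
            rw [this] at hddu0; linarith
        intro u hu
        exact hrest u (by rw [hu0v]; exact hu)
      refine ⟨fun s0 hs0 hsv => ?_, fun u w hru hA => ?_⟩
      · have h := hfib s0 hs0
        have hall : ∀ u ∈ univ.filter (fun u => r u = s0), X u = 0 := by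
          intro u hu
          apply hXzero
          intro huv
          rw [huv] at hu
          have : v = s0 := by
            have := (Finset.mem_filter.mp hu).2
            rw [hrfix v hvS] at this
            exact this
          exact hsv this.symm
        rw [Finset.sum_eq_zero hall] at h
        have : (fibCard r s0 : ℝ) = 1 := by linarith
        exact_mod_cast this
      · by_contra hne
        have hX0 : X u = 0 := hXzero u hne
        have huS : u ∉ S := fun hu => hne ((hrfix u hu).symm.trans hru)
        have hrw : r w = r u := by
          rcases harc u w hA with h | h
          · exact absurd h.1 huS
          · exact h.symm
        have hle : (1 : ℝ) ≤ X u := by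
          rw [hXapp u]
          calc (1 : ℝ) = A u w := hA.symm
            _ ≤ _ := Finset.single_le_sum (fun x _ => hAnn u x) (by simp [hrw])
        linarith
    · intro hOS
      have hXzero : ∀ u, u ≠ v → X u = 0 := by
        intro u hu
        by_cases huS : u ∈ S
        · have h1 : fibCard r u = 1 := hOS.1 u huS hu
          obtain ⟨a, ha⟩ := Finset.card_eq_one.mp h1
          have hua : u ∈ univ.filter (fun w => r w = u) := by simp [hrfix u huS]
          rw [ha] at hua
          have hau : a = u := (Finset.mem_singleton.mp hua).symm
          rw [hXapp u]
          simp only [hrfix u huS]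
          rw [ha, hau, Finset.sum_singleton, hloop u]
        · have hruv : r u = v := by
            by_contra hne
            have h1 : fibCard r (r u) = 1 := hOS.1 (r u) (hrmem u) hne
            obtain ⟨a, ha⟩ := Finset.card_eq_one.mp h1
            have hmem1 : u ∈ univ.filter (fun w => r w = r u) := by simp
            have hmem2 : r u ∈ univ.filter (fun w => r w = r u) := by
              simp [hrfix (r u) (hrmem u)]
            rw [ha] at hmem1 hmem2
            have : u = r u :=
              (Finset.mem_singleton.mp hmem1).trans (Finset.mem_singleton.mp hmem2).symm
            exact huS (this ▸ hrmem u)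
          rw [hXapp u]
          apply Finset.sum_eq_zero
          intro w hw
          rcases h01 u w with h | h
          · exact h
          · exact absurd (hOS.2 u w hruv h) hu
      rw [hupdec]
      have hz : ∀ u ∈ (univ : Finset V),
          2 * ((t : ℝ) - dd u) * X u + X u * ∑ w ∈ univ.erase u, X w = 0 := by
        intro u _
        by_cases huv : u = v
        · subst huv
          have h1 : (t : ℝ) - dd u = 0 := by rw [hddv]; ring
          have h2 : ∑ w ∈ univ.erase u, X w = 0 :=
            Finset.sum_eq_zero (fun w hw => hXzero w (Finset.mem_erase.mp hw).1)
          rw [h1, h2]; ring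
        · rw [hXzero u huv]; ring
      rw [Finset.sum_eq_zero hz, add_zero]
  -- final assembly
  have hα2 : (0 : ℝ) ≤ α ^ 2 := sq_nonneg α
  refine ⟨⟨?_, ?_⟩, fun hαpos => ⟨?_, ?_⟩⟩
  · have h := mul_le_mul_of_nonneg_left hlow hα2
    rw [hE]
    nlinarith [h]
  · have h := mul_le_mul_of_nonneg_left hup hα2
    rw [hE]
    nlinarith [h]
  · have hα2pos : (0 : ℝ) < α ^ 2 := by positivity
    rw [hE]
    constructor
    · intro h
      apply hloweq.mp
      apply mul_left_cancel₀ (ne_of_gt hα2pos)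
      linear_combination h
    · intro hIT
      rw [hloweq.mpr hIT]
      ring
  · have hα2pos : (0 : ℝ) < α ^ 2 := by positivity
    rw [hE]
    constructor
    · intro h
      apply hupeq.mp
      apply mul_left_cancel₀ (ne_of_gt hα2pos)
      linear_combination h
    · intro hOS
      rw [hupeq.mpr hOS]
      ring
end

section
/- Let G ∈ 𝒢_n^m with strong-component vertex set S, let 0 ≤ α < 1, and let M_S be the principal submatrix of A_α(G) with rows and columns indexed by S. Then the A_α spectral radius of G satisfies ρ_α(G) = max { ρ(M_S), α · max_{v∈V∖S} d⁺(v) }, where d⁺(v) is the outdegree of v in G. -/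
open Polynomial Matrix Finset

/-- An acyclic relation on a fintype admits a strictly increasing height. -/
lemma exists_height {V : Type*} [Fintype V] (R : V → V → Prop)
    (hirr : ∀ v, ¬ Relation.TransGen R v v) :
    ∃ g : V → ℕ, ∀ u v, R u v → g u < g v := by
  classical
  refine ⟨fun v => (Finset.univ.filter (fun x => Relation.TransGen R x v)).card, ?_⟩
  intro u v h
  apply Finset.card_lt_card
  constructor
  · intro x hx
    rw [Finset.mem_filter] at hx ⊢
    exact ⟨hx.1, hx.2.tail h⟩
  · intro hsub
    have hu : u ∈ Finset.univ.filter (fun x => Relation.TransGen R x v) :=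
      Finset.mem_filter.mpr ⟨Finset.mem_univ u, Relation.TransGen.single h⟩
    have := Finset.mem_filter.mp (hsub hu)
    exact hirr u this.2

lemma walk_of_rtg {V : Type*} (A : Matrix V V ℝ) (r : V → V) (s : V)
    (hloop : ∀ x, A x x = 0) (a : V) (ha : r a = s) :
    ∀ b, Relation.ReflTransGen (fun u w => A u w = 1 ∧ r u = r w) a b →
      ∀ (hb : r b = s), ∃ W : (fiberGraph A r s).Walk ⟨a, ha⟩ ⟨b, hb⟩,
        ∀ d ∈ W.darts, A d.fst.1 d.snd.1 = 1 := by
  intro b h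
  induction h with
  | refl => exact fun hb => ⟨SimpleGraph.Walk.nil, by simp⟩
  | @tail b' c h1 hstep ih =>
    intro hc
    have hb' : r b' = s := by rw [hstep.2]; exact hc
    obtain ⟨W, hW⟩ := ih hb'
    have hne : b' ≠ c := by
      intro e; rw [e] at hstep; exact one_ne_zero (hstep.1.symm.trans (hloop c))
    have hadj : (fiberGraph A r s).Adj ⟨b', hb'⟩ ⟨c, hc⟩ :=
      show (_ ≠ _) ∧ _ from ⟨fun e => hne (congrArg Subtype.val e), Or.inl hstep.1⟩
    refine ⟨W.concat hadj, ?_⟩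
    intro d hd
    rw [SimpleGraph.Walk.darts_concat, List.concat_eq_append, List.mem_append] at hd
    rcases hd with hd | hd
    · exact hW d hd
    · rw [List.mem_singleton] at hd
      subst hd
      exact hstep.1

lemma fiber_acyclic {V : Type*} [Fintype V] [DecidableEq V] (A : Matrix V V ℝ) (r : V → V)
    (hloop : ∀ x, A x x = 0)
    (hsym : ∀ u v, r u = r v → A u v = 1 → A v u = 0)
    (htree : ∀ v, (fiberGraph A r (r v)).IsAcyclic) :
    ∀ v, ¬ Relation.TransGen (fun u w => A u w = 1 ∧ r u = r w) v v := by
  intro v hv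
  obtain ⟨u, hvu, huv⟩ := Relation.TransGen.head'_iff.mp hv
  have hru : r u = r v := hvu.2.symm
  have hvne : v ≠ u := by
    intro e; rw [← e] at hvu; exact one_ne_zero (hvu.1.symm.trans (hloop v))
  obtain ⟨W, hW⟩ := walk_of_rtg A r (r v) hloop u hru v huv rfl
  have hpu := SimpleGraph.isAcyclic_iff_path_unique.mp (htree v)
  have hadj : (fiberGraph A r (r v)).Adj ⟨v, rfl⟩ ⟨u, hru⟩ :=
    show (_ ≠ _) ∧ _ from ⟨fun e => hvne (congrArg Subtype.val e), Or.inl hvu.1⟩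
  have hP := hpu ⟨W.bypass, W.bypass_isPath⟩ ((SimpleGraph.Path.singleton hadj).reverse)
  have hdarts : W.bypass.darts = (SimpleGraph.Path.singleton hadj).1.reverse.darts := by
    exact congrArg SimpleGraph.Walk.darts (Subtype.ext_iff.mp hP)
  have hmem : (⟨(⟨v, rfl⟩, ⟨u, hru⟩), hadj⟩ : (fiberGraph A r (r v)).Dart).symm
      ∈ W.bypass.darts := by
    rw [hdarts]
    simp [SimpleGraph.Path.singleton, SimpleGraph.Walk.darts_reverse]
  have h1 : A u v = 1 := hW _ (SimpleGraph.Walk.darts_bypass_subset W hmem)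
  have h0 : A u v = 0 := hsym v u hvu.2 hvu.1
  exact one_ne_zero (h1.symm.trans h0)

lemma charpoly_diagonal' {R : Type*} [CommRing R] {ι : Type*} [Fintype ι] [DecidableEq ι]
    (d : ι → R) : (Matrix.diagonal d).charpoly = ∏ i, (X - C (d i)) := by
  have h : charmatrix (Matrix.diagonal d) = Matrix.diagonal (fun i => (X : R[X]) - C (d i)) := by
    ext i j
    by_cases hij : i = j
    · subst hij; simp [charmatrix_apply_eq]
    · rw [charmatrix_apply_ne _ _ _ hij, Matrix.diagonal_apply_ne _ hij,
        Matrix.diagonal_apply_ne _ hij, map_zero, neg_zero]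
  show (charmatrix (Matrix.diagonal d)).det = _
  rw [h, Matrix.det_diagonal]

/-- Characteristic polynomial factorization for a block-triangularizable matrix. -/
lemma charpoly_factor {V : Type*} [Fintype V] [DecidableEq V] (M : Matrix V V ℝ)
    (S : Finset V) (hS : S.Nonempty) (b : V → ℤ)
    (hb0 : ∀ v, b v = 0 ↔ v ∈ S)
    (hBT : ∀ i j, b j < b i → M i j = 0)
    (hdiag : ∀ i j, i ≠ j → b i = b j → b i ≠ 0 → M i j = 0) :
    M.charpoly = (subm M S).charpoly *
      ∏ v ∈ Finset.univ.filter (fun v => v ∉ S), (X - C (M v v)) := by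
  classical
  have hBT' : BlockTriangular (charmatrix M) b := by
    intro i j hij
    have hne : i ≠ j := by rintro rfl; exact absurd hij (lt_irrefl _)
    rw [charmatrix_apply_ne _ _ _ hne, hBT i j hij, map_zero, neg_zero]
  have h0 : (0 : ℤ) ∈ Finset.univ.image b := by
    obtain ⟨s, hs⟩ := hS
    exact Finset.mem_image.mpr ⟨s, Finset.mem_univ s, (hb0 s).mpr hs⟩
  have hblock : ∀ a : ℤ, ((charmatrix M).toSquareBlock b a).det
      = (M.toSquareBlock b a).charpoly := by
    intro a
    have : (charmatrix M).toSquareBlock b a = charmatrix (M.toSquareBlock b a) := by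
      refine Matrix.ext fun i j => ?_
      by_cases hij : i = j
      · subst hij
        show charmatrix M i.1 i.1 = _
        rw [charmatrix_apply_eq, charmatrix_apply_eq]
        rfl
      · have hij' : i.1 ≠ j.1 := fun e => hij (Subtype.ext e)
        show charmatrix M i.1 j.1 = _
        rw [charmatrix_apply_ne _ _ _ hij', charmatrix_apply_ne _ _ _ hij]
        rfl
    rw [this]; rfl
  have key : M.charpoly = ∏ a ∈ Finset.univ.image b, (M.toSquareBlock b a).charpoly := by
    show (charmatrix M).det = _
    rw [hBT'.det]
    exact Finset.prod_congr rfl (fun a _ => hblock a)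
  rw [key, ← Finset.mul_prod_erase _ _ h0]
  congr 1
  · have : M.toSquareBlock b 0 = (Matrix.reindex (Equiv.subtypeEquivRight hb0).symm
        (Equiv.subtypeEquivRight hb0).symm) (subm M S) := by
      refine Matrix.ext fun i j => ?_
      simp [Matrix.toSquareBlock_def, subm, Matrix.reindex_apply, Matrix.submatrix_apply,
        Equiv.subtypeEquivRight_apply]
    rw [this, Matrix.charpoly_reindex]
  · have hstep : ∀ a ∈ (Finset.univ.image b).erase 0,
        (M.toSquareBlock b a).charpoly
          = ∏ v ∈ Finset.univ.filter (fun v => b v = a), (X - C (M v v)) := by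
      intro a ha
      have ha0 : a ≠ 0 := (Finset.mem_erase.mp ha).1
      have hdiag' : M.toSquareBlock b a
          = Matrix.diagonal (fun i : {v // b v = a} => M i.1 i.1) := by
        refine Matrix.ext fun i j => ?_
        by_cases hij : i = j
        · subst hij; simp [Matrix.toSquareBlock_def]
        · rw [Matrix.diagonal_apply_ne _ hij]
          exact hdiag i.1 j.1 (fun e => hij (Subtype.ext e))
            (i.2.trans j.2.symm) (i.2.trans_ne ha0)
      rw [hdiag', charpoly_diagonal']
      exact (Finset.prod_subtype _ (fun v => by simp) (fun v => (X : ℝ[X]) - C (M v v))).symm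
    rw [Finset.prod_congr rfl hstep]
    have hmaps : ∀ v ∈ Finset.univ.filter (fun v => v ∉ S),
        b v ∈ (Finset.univ.image b).erase 0 := by
      intro v hv
      rw [Finset.mem_filter] at hv
      exact Finset.mem_erase.mpr ⟨fun e => hv.2 ((hb0 v).mp e),
        Finset.mem_image.mpr ⟨v, Finset.mem_univ v, rfl⟩⟩
    rw [← Finset.prod_fiberwise_of_maps_to hmaps (fun v => (X : ℝ[X]) - C (M v v))]
    refine Finset.prod_congr rfl (fun a ha => Finset.prod_congr ?_ (fun _ _ => rfl))
    ext v
    simp only [Finset.mem_filter, Finset.mem_univ, true_and]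
    have ha0 : a ≠ 0 := (Finset.mem_erase.mp ha).1
    constructor
    · intro h; exact ⟨fun hvS => ha0 (h ▸ (hb0 v).mpr hvS), h⟩
    · intro h; exact h.2

/-- For `G ∈ 𝒢_n^m`, the `A_α` spectral radius of `G` equals the maximum of the spectral
radius of the principal submatrix of `A_α(G)` on `S` and `α` times the maximal outdegree
of a vertex outside `S`. -/
theorem stmt17 {V : Type*} [Fintype V] [DecidableEq V] (A : Matrix V V ℝ) (S : Finset V)
    (r : V → V) (n m : ℕ) (hG : IsGnm A S r n m) (α : ℝ) (hα0 : 0 ≤ α) (hα1 : α < 1) :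
    specRad (Aalpha α A) =
      max (specRad (subm (Aalpha α A) S))
        (α * sSup (outdeg A '' {v : V | v ∉ S})) := by
  classical
  -- the directed fiber relation and its height
  set R' : V → V → Prop := fun u w => A u w = 1 ∧ r u = r w with hR'
  have hirr : ∀ v, ¬ Relation.TransGen R' v v :=
    fiber_acyclic A r hG.loopless hG.fiber_no_symm
      (fun v => (hG.fiber_tree (r v) (hG.r_mem v)).IsAcyclic)
  obtain ⟨g, hg⟩ := exists_height R' hirr
  -- the block function
  set b : V → ℤ := fun v => if v ∈ S then 0 else 2 * ((g v : ℤ) - (g (r v) : ℤ)) + 1 with hb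
  have hb0 : ∀ v, b v = 0 ↔ v ∈ S := by
    intro v
    by_cases hvS : v ∈ S
    · simp [hb, hvS]
    · simp only [hb, if_neg hvS]
      constructor
      · intro h; omega
      · intro h; exact absurd h hvS
  set M : Matrix V V ℝ := Aalpha α A with hM
  have hM_off : ∀ i j, i ≠ j → M i j = (1 - α) * A i j := by
    intro i j hij
    simp [hM, Aalpha, Matrix.add_apply, Matrix.smul_apply, Matrix.diagonal_apply_ne _ hij,
      smul_eq_mul]
  have hM_diag : ∀ v, M v v = α * outdeg A v := by
    intro v
    simp [hM, Aalpha, Matrix.add_apply, Matrix.smul_apply, Matrix.diagonal_apply_eq,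
      smul_eq_mul, hG.loopless v]
  -- the order property of arcs
  have hzero : ∀ i j, i ≠ j → A i j = 1 → b i < b j ∨ (i ∈ S ∧ j ∈ S) := by
    intro i j hij h1
    by_cases hiS : i ∈ S <;> by_cases hjS : j ∈ S
    · exact Or.inr ⟨hiS, hjS⟩
    · left
      have hr : r i = r j := by
        rcases hG.arc_cases i j h1 with h | h
        · exact absurd h.2 hjS
        · exact h
      have hgij : g i < g j := hg i j ⟨h1, hr⟩
      have hrj : r j = i := hr.symm.trans (hG.r_fix i hiS)
      simp only [hb, if_pos hiS, if_neg hjS]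
      rw [hrj]
      omega
    · left
      have hr : r i = r j := by
        rcases hG.arc_cases i j h1 with h | h
        · exact absurd h.1 hiS
        · exact h
      have hgij : g i < g j := hg i j ⟨h1, hr⟩
      have hri : r i = j := hr.trans (hG.r_fix j hjS)
      simp only [hb, if_pos hjS, if_neg hiS]
      rw [hri]
      omega
    · left
      have hr : r i = r j := by
        rcases hG.arc_cases i j h1 with h | h
        · exact absurd h.1 hiS
        · exact h
      have hgij : g i < g j := hg i j ⟨h1, hr⟩
      simp only [hb, if_neg hiS, if_neg hjS]
      rw [hr]
      omega
  have hBT : ∀ i j, b j < b i → M i j = 0 := by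
    intro i j hlt
    have hij : i ≠ j := by rintro rfl; exact absurd hlt (lt_irrefl _)
    rw [hM_off i j hij]
    rcases hG.zero_one i j with h | h
    · rw [h, mul_zero]
    · rcases hzero i j hij h with h2 | ⟨hiS, hjS⟩
      · exact absurd hlt (not_lt.mpr h2.le)
      · have e1 : b i = 0 := (hb0 i).mpr hiS
        have e2 : b j = 0 := (hb0 j).mpr hjS
        omega
  have hdiag : ∀ i j, i ≠ j → b i = b j → b i ≠ 0 → M i j = 0 := by
    intro i j hij heq hne0
    rw [hM_off i j hij]
    rcases hG.zero_one i j with h | h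
    · rw [h, mul_zero]
    · rcases hzero i j hij h with h2 | ⟨hiS, hjS⟩
      · omega
      · exact absurd ((hb0 i).mpr hiS) hne0
  have hSne : S.Nonempty := by
    rw [← Finset.card_pos, hG.card_S]
    have := hG.two_le_m
    omega
  have hfact : M.charpoly = (subm M S).charpoly *
      ∏ v ∈ Finset.univ.filter (fun v => v ∉ S), (X - C (α * outdeg A v)) := by
    rw [charpoly_factor M S hSne b hb0 hBT hdiag]
    congr 1
    exact Finset.prod_congr rfl (fun v _ => by rw [hM_diag v])
  -- pass to ℂ
  have hcoe : ((↑) : ℝ → ℂ) = ⇑(algebraMap ℝ ℂ) := rfl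
  have hmapq : (M.map ((↑) : ℝ → ℂ)).charpoly = (M.charpoly).map (algebraMap ℝ ℂ) := by
    rw [hcoe, Matrix.charpoly_map]
  have hmapp : ((subm M S).map ((↑) : ℝ → ℂ)).charpoly
      = ((subm M S).charpoly).map (algebraMap ℝ ℂ) := by
    rw [hcoe, Matrix.charpoly_map]
  set p1 : Polynomial ℂ := ((subm M S).map ((↑) : ℝ → ℂ)).charpoly with hp1
  have hq : (M.map ((↑) : ℝ → ℂ)).charpoly
      = p1 * ∏ v ∈ Finset.univ.filter (fun v => v ∉ S),
          (X - C ((α * outdeg A v : ℝ) : ℂ)) := by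
    rw [hmapq, hfact, Polynomial.map_mul, Polynomial.map_prod, ← hmapp]
    congr 1
    refine Finset.prod_congr rfl (fun v _ => ?_)
    rw [Polynomial.map_sub, Polynomial.map_X, Polynomial.map_C, Complex.coe_algebraMap]
  have houtnn : ∀ v, 0 ≤ outdeg A v := fun v =>
    Finset.sum_nonneg fun w _ => by rcases hG.zero_one v w with h | h <;> rw [h] <;> norm_num
  have hroot : ∀ z : ℂ, ((M.map ((↑) : ℝ → ℂ)).charpoly).IsRoot z
      ↔ p1.IsRoot z ∨ ∃ v, v ∉ S ∧ z = ((α * outdeg A v : ℝ) : ℂ) := by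
    intro z
    rw [hq]
    simp only [Polynomial.IsRoot, Polynomial.eval_mul, Polynomial.eval_prod,
      Polynomial.eval_sub, Polynomial.eval_X, Polynomial.eval_C, mul_eq_zero,
      Finset.prod_eq_zero_iff, Finset.mem_filter, Finset.mem_univ, true_and, sub_eq_zero]
  have hvex : ∃ v, v ∉ S := by
    by_contra h
    push_neg at h
    have huniv : S = Finset.univ := Finset.eq_univ_iff_forall.mpr h
    have h1 := hG.card_S
    have h2 := hG.card_V
    have h3 := hG.m_lt_n
    rw [huniv, Finset.card_univ, h2] at h1
    omega
  set E1 : Set ℝ := {x : ℝ | ∃ z : ℂ, p1.IsRoot z ∧ ‖z‖ = x} with hE1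
  set E2 : Set ℝ := (fun v => α * outdeg A v) '' {v : V | v ∉ S} with hE2
  have hset : {x : ℝ | ∃ z : ℂ, ((M.map ((↑) : ℝ → ℂ)).charpoly).IsRoot z ∧ ‖z‖ = x}
      = E1 ∪ E2 := by
    ext x
    simp only [hE1, hE2, Set.mem_setOf_eq, Set.mem_union, Set.mem_image, Set.mem_setOf_eq]
    constructor
    · rintro ⟨z, hz, rfl⟩
      rcases (hroot z).mp hz with h | ⟨v, hv, rfl⟩
      · exact Or.inl ⟨z, h, rfl⟩
      · exact Or.inr ⟨v, hv,
          by rw [Complex.norm_real, Real.norm_eq_abs, abs_of_nonneg (mul_nonneg hα0 (houtnn v))]⟩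
    · rintro (⟨z, hz, rfl⟩ | ⟨v, hv, rfl⟩)
      · exact ⟨z, (hroot z).mpr (Or.inl hz), rfl⟩
      · exact ⟨((α * outdeg A v : ℝ) : ℂ), (hroot _).mpr (Or.inr ⟨v, hv, rfl⟩),
          by rw [Complex.norm_real, Real.norm_eq_abs, abs_of_nonneg (mul_nonneg hα0 (houtnn v))]⟩
  have hp1ne : p1 ≠ 0 := (Matrix.charpoly_monic _).ne_zero
  have hE1eq : E1 = (‖·‖) '' {z : ℂ | p1.IsRoot z} := by
    ext x
    simp only [hE1, Set.mem_setOf_eq, Set.mem_image]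
  have hE1fin : E1.Finite := by
    rw [hE1eq]; exact (Polynomial.finite_setOf_isRoot hp1ne).image _
  have hE1ne : E1.Nonempty := by
    have hdeg : 0 < p1.degree := by
      rw [← Polynomial.natDegree_pos_iff_degree_pos, hp1,
        Matrix.charpoly_natDegree_eq_dim, Fintype.card_coe, hG.card_S]
      have := hG.two_le_m
      omega
    obtain ⟨z, hz⟩ := Complex.exists_root hdeg
    exact ⟨‖z‖, z, hz, rfl⟩
  have hE2ne : E2.Nonempty := by
    obtain ⟨v, hv⟩ := hvex
    exact ⟨_, v, hv, rfl⟩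
  have hE2fin : E2.Finite := Set.toFinite _
  have hgoal : specRad M = sSup (E1 ∪ E2) := by
    rw [specRad, hset]
  rw [hgoal, csSup_union hE1fin.bddAbove hE1ne hE2fin.bddAbove hE2ne]
  have hTne : (outdeg A '' {v : V | v ∉ S}).Nonempty := by
    obtain ⟨v, hv⟩ := hvex
    exact ⟨_, v, hv, rfl⟩
  have hTfin : (outdeg A '' {v : V | v ∉ S}).Finite := Set.toFinite _
  have hsup2 : sSup E2 = α * sSup (outdeg A '' {v : V | v ∉ S}) := by
    have hTset : E2 = (fun x => α * x) '' (outdeg A '' {v : V | v ∉ S}) := by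
      rw [hE2, Set.image_image]
    rw [hTset]
    apply le_antisymm
    · refine csSup_le (hTne.image _) ?_
      rintro x ⟨t, ht, rfl⟩
      exact mul_le_mul_of_nonneg_left (le_csSup hTfin.bddAbove ht) hα0
    · have hmem := hTne.csSup_mem hTfin
      exact le_csSup ((hTfin.image _).bddAbove) ⟨_, hmem, rfl⟩
  rw [hsup2]
  rfl
end
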